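/- arXiv:2510.03338 — 4 statements merged into one kernel-verified Lean document; each statement's English description precedes it below -/
import Mathlib

section
/- Let α > 0, μ ∈ ℝ, σ > 0 and ξ > 0. Then each of the three functions x ↦ S_μ(x) · f(x; μ,σ,ξ)^α, x ↦ S_σ(x) · f(x; μ,σ,ξ)^α, and x ↦ S_ξ(x) · f(x; μ,σ,ξ)^α is bounded on the open interval (μ − σ/ξ, ∞). -/
open MeasureTheory Real

/-- `t(x) = 1 + ξ (x-μ)/σ`. -/
noncomputable def gevT (μ σ ξ x : ℝ) : ℝ := 1 + ξ * ((x - μ) / σ)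

/-- The Generalized Extreme-Value (GEV) density with shape `ξ ≠ 0`. -/
noncomputable def gevDensity (μ σ ξ x : ℝ) : ℝ :=
  if 0 < gevT μ σ ξ x then
    σ⁻¹ * gevT μ σ ξ x ^ (-(ξ + 1) / ξ) *
      Real.exp (-(gevT μ σ ξ x ^ (-1 / ξ)))
  else 0

/-- The location score `S_μ(x) = (1/(σ t(x))) (ξ + 1 - t(x)^{-1/ξ})`. -/
noncomputable def scoreMu (μ σ ξ x : ℝ) : ℝ :=
  (σ * gevT μ σ ξ x)⁻¹ * (ξ + 1 - gevT μ σ ξ x ^ (-1 / ξ))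

/-- The scale score `S_σ(x) = -1/σ + ((x-μ)/(σ² t(x))) (ξ + 1 - t(x)^{-1/ξ})`. -/
noncomputable def scoreSigma (μ σ ξ x : ℝ) : ℝ :=
  -σ⁻¹ + ((x - μ) / (σ ^ 2 * gevT μ σ ξ x)) * (ξ + 1 - gevT μ σ ξ x ^ (-1 / ξ))

/-- The shape score
`S_ξ(x) = (1/ξ²) log t(x) (1 - t(x)^{-1/ξ}) - ((x-μ)/(ξσ t(x))) (ξ + 1 - t(x)^{-1/ξ})`. -/
noncomputable def scoreXi (μ σ ξ x : ℝ) : ℝ :=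
  (1 / ξ ^ 2) * Real.log (gevT μ σ ξ x) * (1 - gevT μ σ ξ x ^ (-1 / ξ)) -
    ((x - μ) / (ξ * σ * gevT μ σ ξ x)) * (ξ + 1 - gevT μ σ ξ x ^ (-1 / ξ))

open MeasureTheory Real Filter Set Topology

/-- A continuous function on `(a, ∞)` tending to `0` at both ends is bounded. -/
lemma bdd_helper {g : ℝ → ℝ} {a : ℝ} (hc : ContinuousOn g (Set.Ioi a))
    (h0 : Tendsto g (𝓝[>] a) (𝓝 0)) (htop : Tendsto g atTop (𝓝 0)) :
    ∃ C, ∀ x ∈ Set.Ioi a, |g x| ≤ C := by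
  have h1 : ∀ᶠ x in 𝓝[>] a, |g x| ≤ 1 := by
    filter_upwards [Metric.tendsto_nhds.mp h0 1 one_pos] with x hx
    simpa [Real.dist_eq] using hx.le
  obtain ⟨b, hb, hIoo⟩ := mem_nhdsGT_iff_exists_Ioo_subset.mp h1
  have h2 : ∀ᶠ x in atTop, |g x| ≤ 1 := by
    filter_upwards [Metric.tendsto_nhds.mp htop 1 one_pos] with x hx
    simpa [Real.dist_eq] using hx.le
  obtain ⟨N, hN⟩ := eventually_atTop.mp h2
  obtain ⟨M, hM⟩ := (isCompact_Icc (a := b) (b := N)).exists_bound_of_continuousOn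
    (hc.mono (fun x hx => lt_of_lt_of_le hb hx.1))
  refine ⟨max 1 M, fun x hx => ?_⟩
  rcases lt_or_ge x b with h | h
  · exact le_trans (hIoo ⟨hx, h⟩) (le_max_left _ _)
  · rcases le_or_gt N x with h' | h'
    · exact le_trans (hN x h') (le_max_left _ _)
    · simpa using le_trans (hM x ⟨h, h'.le⟩) (le_max_right _ _)

/-- Boundedness via a representation `g = G ∘ u` on `(a, ∞)`. -/
lemma bdd_of_rep {g G u : ℝ → ℝ} {a : ℝ}
    (hu_c : ContinuousOn u (Set.Ioi a)) (hu_pos : ∀ x ∈ Set.Ioi a, 0 < u x)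
    (hu_a : Tendsto u (𝓝[>] a) atTop) (hu_top : Tendsto u atTop (𝓝[>] (0:ℝ)))
    (hG : ContinuousOn G (Set.Ioi 0)) (hG0 : Tendsto G (𝓝[>] (0:ℝ)) (𝓝 0))
    (hGtop : Tendsto G atTop (𝓝 0))
    (heq : ∀ x ∈ Set.Ioi a, g x = G (u x)) :
    ∃ C, ∀ x ∈ Set.Ioi a, |g x| ≤ C := by
  have hmaps : Set.MapsTo u (Set.Ioi a) (Set.Ioi (0:ℝ)) := fun x hx => hu_pos x hx
  have hc : ContinuousOn g (Set.Ioi a) := (hG.comp hu_c hmaps).congr heq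
  have h0 : Tendsto g (𝓝[>] a) (𝓝 0) := by
    refine (hGtop.comp hu_a).congr' ?_
    filter_upwards [eventually_mem_nhdsWithin] with x hx
    exact (heq x hx).symm
  have ht : Tendsto g atTop (𝓝 0) := by
    refine (hG0.comp hu_top).congr' ?_
    filter_upwards [eventually_gt_atTop a] with x hx
    exact (heq x hx).symm
  exact bdd_helper hc h0 ht

/-- monomial times decaying exponential tends to zero at infinity -/
lemma mono_top (p β : ℝ) (hβ : 0 < β) :
    Tendsto (fun u : ℝ => u ^ p * Real.exp (-(β * u))) atTop (𝓝 0) := by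
  simpa [neg_mul] using tendsto_rpow_mul_exp_neg_mul_atTop_nhds_zero p β hβ

lemma log_exp_top (β : ℝ) (hβ : 0 < β) :
    Tendsto (fun u : ℝ => Real.log u * Real.exp (-(β * u))) atTop (𝓝 0) := by
  have hup : Tendsto (fun u : ℝ => u ^ (1:ℝ) * Real.exp (-(β * u))) atTop (𝓝 0) :=
    mono_top 1 β hβ
  refine tendsto_of_tendsto_of_tendsto_of_le_of_le' tendsto_const_nhds hup ?_ ?_
  · filter_upwards [eventually_ge_atTop (1:ℝ)] with u hu
    exact mul_nonneg (Real.log_nonneg hu) (Real.exp_pos _).le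
  · filter_upwards [eventually_ge_atTop (1:ℝ)] with u hu
    have h1 : Real.log u ≤ u := (Real.log_le_sub_one_of_pos (by linarith)).trans (by linarith)
    rw [Real.rpow_one]
    exact mul_le_mul_of_nonneg_right h1 (Real.exp_pos _).le

lemma logmono_top (p β : ℝ) (hβ : 0 < β) :
    Tendsto (fun u : ℝ => Real.log u * (u ^ p * Real.exp (-(β * u)))) atTop (𝓝 0) := by
  have h := (log_exp_top (β/2) (by linarith)).mul (mono_top p (β/2) (by linarith))
  rw [zero_mul] at h
  refine h.congr (fun u => ?_)
  have h1 : Real.exp (-(β/2 * u)) * Real.exp (-(β/2 * u)) = Real.exp (-(β * u)) := by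
    rw [← Real.exp_add]; congr 1; ring
  linear_combination (Real.log u * u ^ p) * h1
noncomputable def gevT' (μ σ ξ x : ℝ) : ℝ := 1 + ξ * ((x - μ) / σ)

noncomputable def gevU (μ σ ξ x : ℝ) : ℝ := gevT' μ σ ξ x ^ (-1 / ξ)

noncomputable def Gmu (α σ ξ : ℝ) (u : ℝ) : ℝ :=
  σ⁻¹ * u ^ ξ * (ξ + 1 - u) * (σ ^ (-α) * u ^ (α * (ξ + 1)) * Real.exp (-(α * u)))

noncomputable def Gsig (α σ ξ : ℝ) (u : ℝ) : ℝ :=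
  (-σ⁻¹ + (1 - u ^ ξ) / (ξ * σ) * (ξ + 1 - u)) *
    (σ ^ (-α) * u ^ (α * (ξ + 1)) * Real.exp (-(α * u)))

noncomputable def Gxi (α σ ξ : ℝ) (u : ℝ) : ℝ :=
  ((1 / ξ ^ 2) * (-ξ * Real.log u) * (1 - u) - (1 - u ^ ξ) / ξ ^ 2 * (ξ + 1 - u)) *
    (σ ^ (-α) * u ^ (α * (ξ + 1)) * Real.exp (-(α * u)))

section identities

variable {α μ σ ξ x : ℝ}

lemma gevU_pos (ht : 0 < gevT' μ σ ξ x) : 0 < gevU μ σ ξ x :=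
  Real.rpow_pos_of_pos ht _

lemma inv_t_eq (hξ : ξ ≠ 0) (ht : 0 < gevT' μ σ ξ x) :
    (gevT' μ σ ξ x)⁻¹ = gevU μ σ ξ x ^ ξ := by
  rw [gevU, ← Real.rpow_mul ht.le, div_mul_cancel₀ _ hξ, Real.rpow_neg_one]

lemma log_t_eq (hξ : ξ ≠ 0) (ht : 0 < gevT' μ σ ξ x) :
    Real.log (gevT' μ σ ξ x) = -ξ * Real.log (gevU μ σ ξ x) := by
  rw [gevU, Real.log_rpow ht]
  field_simp

lemma xsub_eq (hσ : σ ≠ 0) (hξ : ξ ≠ 0) :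
    x - μ = σ * (gevT' μ σ ξ x - 1) / ξ := by
  rw [gevT']; field_simp; ring

lemma density_eq (hα : 0 < α) (hσ : 0 < σ) (hξ : 0 < ξ) (ht : 0 < gevT' μ σ ξ x) :
    gevDensity μ σ ξ x ^ α =
      σ ^ (-α) * gevU μ σ ξ x ^ (α * (ξ + 1)) * Real.exp (-(α * gevU μ σ ξ x)) := by
  have hT : gevT μ σ ξ x = gevT' μ σ ξ x := rfl
  have hu := gevU_pos ht
  have h1 : gevT' μ σ ξ x ^ (-(ξ + 1) / ξ) = gevU μ σ ξ x ^ (ξ + 1) := by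
    rw [gevU, ← Real.rpow_mul ht.le]
    congr 1; ring
  rw [gevDensity, hT, if_pos ht, h1,
    Real.mul_rpow (by positivity) (Real.exp_nonneg _),
    Real.mul_rpow (by positivity) (by positivity),
    Real.inv_rpow hσ.le, ← Real.rpow_neg hσ.le,
    ← Real.rpow_mul hu.le, ← Real.exp_mul]
  rw [show (ξ + 1) * α = α * (ξ + 1) from mul_comm _ _]
  congr 1
  rw [gevU]; ring

lemma scoreMu_eq (hα : 0 < α) (hσ : 0 < σ) (hξ : 0 < ξ) (ht : 0 < gevT' μ σ ξ x) :
    scoreMu μ σ ξ x * gevDensity μ σ ξ x ^ α = Gmu α σ ξ (gevU μ σ ξ x) := by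
  have hT : gevT μ σ ξ x = gevT' μ σ ξ x := rfl
  rw [scoreMu, hT, density_eq hα hσ hξ ht, Gmu, mul_inv, inv_t_eq hξ.ne' ht, gevU]

lemma scoreSigma_eq (hα : 0 < α) (hσ : 0 < σ) (hξ : 0 < ξ) (ht : 0 < gevT' μ σ ξ x) :
    scoreSigma μ σ ξ x * gevDensity μ σ ξ x ^ α = Gsig α σ ξ (gevU μ σ ξ x) := by
  have hT : gevT μ σ ξ x = gevT' μ σ ξ x := rfl
  have hfrac : (x - μ) / (σ ^ 2 * gevT' μ σ ξ x) =
      (1 - gevU μ σ ξ x ^ ξ) / (ξ * σ) := by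
    rw [xsub_eq hσ.ne' hξ.ne', ← inv_t_eq hξ.ne' ht]
    field_simp
  rw [scoreSigma, hT, density_eq hα hσ hξ ht, Gsig, hfrac, gevU]

lemma scoreXi_eq (hα : 0 < α) (hσ : 0 < σ) (hξ : 0 < ξ) (ht : 0 < gevT' μ σ ξ x) :
    scoreXi μ σ ξ x * gevDensity μ σ ξ x ^ α = Gxi α σ ξ (gevU μ σ ξ x) := by
  have hT : gevT μ σ ξ x = gevT' μ σ ξ x := rfl
  have hfrac : (x - μ) / (ξ * σ * gevT' μ σ ξ x) =
      (1 - gevU μ σ ξ x ^ ξ) / ξ ^ 2 := by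
    rw [xsub_eq hσ.ne' hξ.ne', ← inv_t_eq hξ.ne' ht]
    field_simp
  rw [scoreXi, hT, density_eq hα hσ hξ ht, Gxi, hfrac, log_t_eq hξ.ne' ht, gevU]

end identities

section limits

variable {α σ ξ : ℝ}

lemma rpow_tendsto_zero {p : ℝ} (hp : 0 < p) :
    Tendsto (fun u : ℝ => u ^ p) (𝓝[>] (0:ℝ)) (𝓝 0) := by
  have := (Real.continuousAt_rpow_const 0 p (Or.inr hp.le)).tendsto.mono_left
    (nhdsWithin_le_nhds (s := Set.Ioi (0:ℝ)))
  simpa [Real.zero_rpow hp.ne'] using this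

lemma exp_tendsto_one : Tendsto (fun u : ℝ => Real.exp (-(α * u))) (𝓝[>] (0:ℝ)) (𝓝 1) := by
  have hc : Continuous fun u : ℝ => Real.exp (-(α * u)) := by continuity
  simpa using (hc.tendsto 0).mono_left (nhdsWithin_le_nhds (s := Set.Ioi (0:ℝ)))

lemma id_tendsto_zero : Tendsto (fun u : ℝ => u) (𝓝[>] (0:ℝ)) (𝓝 0) :=
  (continuous_id.tendsto 0).mono_left nhdsWithin_le_nhds

lemma Gmu_zero (hα : 0 < α) (hσ : 0 < σ) (hξ : 0 < ξ) :
    Tendsto (Gmu α σ ξ) (𝓝[>] (0:ℝ)) (𝓝 0) := by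
  have hq : (0:ℝ) < α * (ξ + 1) := by positivity
  have h := ((tendsto_const_nhds (x := σ⁻¹)).mul (rpow_tendsto_zero hξ)).mul
      ((tendsto_const_nhds (x := ξ + 1)).sub id_tendsto_zero) |>.mul
      (((tendsto_const_nhds (x := σ ^ (-α))).mul (rpow_tendsto_zero hq)).mul (exp_tendsto_one (α := α)))
  simp at h; exact h

lemma Gsig_zero (hα : 0 < α) (hσ : 0 < σ) (hξ : 0 < ξ) :
    Tendsto (Gsig α σ ξ) (𝓝[>] (0:ℝ)) (𝓝 0) := by
  have hq : (0:ℝ) < α * (ξ + 1) := by positivity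
  have h := ((tendsto_const_nhds (x := -σ⁻¹)).add
      ((((tendsto_const_nhds (x := (1:ℝ))).sub (rpow_tendsto_zero hξ)).div_const (ξ * σ)).mul
        ((tendsto_const_nhds (x := ξ + 1)).sub id_tendsto_zero))).mul
      (((tendsto_const_nhds (x := σ ^ (-α))).mul (rpow_tendsto_zero hq)).mul (exp_tendsto_one (α := α)))
  simp at h; exact h

lemma Gxi_zero (hα : 0 < α) (hσ : 0 < σ) (hξ : 0 < ξ) :
    Tendsto (Gxi α σ ξ) (𝓝[>] (0:ℝ)) (𝓝 0) := by
  have hq : (0:ℝ) < α * (ξ + 1) := by positivity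
  have h1 : Tendsto (fun u : ℝ =>
      (-(1/ξ) * σ ^ (-α)) * (Real.log u * u ^ (α * (ξ + 1))) * ((1 - u) * Real.exp (-(α * u))))
      (𝓝[>] (0:ℝ)) (𝓝 0) := by
    have := ((tendsto_const_nhds (x := -(1/ξ) * σ ^ (-α))).mul
        (tendsto_log_mul_rpow_nhdsGT_zero hq)).mul
        (((tendsto_const_nhds (x := (1:ℝ))).sub id_tendsto_zero).mul (exp_tendsto_one (α := α)))
    simpa using this
  have h2 : Tendsto (fun u : ℝ =>
      (1 - u ^ ξ) / ξ ^ 2 * (ξ + 1 - u) * (σ ^ (-α) * u ^ (α * (ξ + 1)) * Real.exp (-(α * u))))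
      (𝓝[>] (0:ℝ)) (𝓝 0) := by
    have := ((((tendsto_const_nhds (x := (1:ℝ))).sub (rpow_tendsto_zero hξ)).div_const (ξ^2)).mul
        ((tendsto_const_nhds (x := ξ + 1)).sub id_tendsto_zero)).mul
        (((tendsto_const_nhds (x := σ ^ (-α))).mul (rpow_tendsto_zero hq)).mul (exp_tendsto_one (α := α)))
    simpa using this
  have h := h1.sub h2
  rw [sub_zero] at h
  have hξ' : ξ ≠ 0 := hξ.ne'
  refine h.congr (fun u => ?_)
  rw [Gxi]
  field_simp

lemma Gmu_top (hα : 0 < α) (hσ : 0 < σ) (hξ : 0 < ξ) :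
    Tendsto (Gmu α σ ξ) atTop (𝓝 0) := by
  have h1 := (mono_top (ξ + α * (ξ + 1)) α hα).const_mul (σ⁻¹ * (ξ + 1) * σ ^ (-α))
  have h2 := (mono_top (ξ + α * (ξ + 1) + 1) α hα).const_mul (σ⁻¹ * σ ^ (-α))
  have h := h1.sub h2
  simp only [mul_zero, sub_zero] at h
  refine h.congr' ?_
  filter_upwards [eventually_gt_atTop (0:ℝ)] with u hu
  rw [Gmu, Real.rpow_add hu (ξ + α * (ξ + 1)) 1, Real.rpow_add hu ξ (α * (ξ + 1)),
    Real.rpow_one]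
  ring

lemma Gsig_top (hα : 0 < α) (hσ : 0 < σ) (hξ : 0 < ξ) :
    Tendsto (Gsig α σ ξ) atTop (𝓝 0) := by
  have h1 := (mono_top (α * (ξ + 1)) α hα).const_mul
    (-σ⁻¹ * σ ^ (-α) + (ξ + 1) / (ξ * σ) * σ ^ (-α))
  have h2 := (mono_top (α * (ξ + 1) + 1) α hα).const_mul ((1 / (ξ * σ)) * σ ^ (-α))
  have h3 := (mono_top (α * (ξ + 1) + ξ) α hα).const_mul (((ξ + 1) / (ξ * σ)) * σ ^ (-α))
  have h4 := (mono_top (α * (ξ + 1) + ξ + 1) α hα).const_mul ((1 / (ξ * σ)) * σ ^ (-α))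
  have h := ((h1.sub h2).sub h3).add h4
  simp only [mul_zero, sub_zero, add_zero] at h
  refine h.congr' ?_
  filter_upwards [eventually_gt_atTop (0:ℝ)] with u hu
  rw [Gsig, Real.rpow_add hu (α * (ξ + 1) + ξ) 1, Real.rpow_add hu (α * (ξ + 1)) ξ,
    Real.rpow_add hu (α * (ξ + 1)) 1, Real.rpow_one]
  field_simp
  ring

lemma Gxi_top (hα : 0 < α) (hσ : 0 < σ) (hξ : 0 < ξ) :
    Tendsto (Gxi α σ ξ) atTop (𝓝 0) := by
  have hl1 := (logmono_top (α * (ξ + 1)) α hα).const_mul (-(1/ξ) * σ ^ (-α))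
  have hl2 := (logmono_top (α * (ξ + 1) + 1) α hα).const_mul ((1/ξ) * σ ^ (-α))
  have h1 := (mono_top (α * (ξ + 1)) α hα).const_mul (((ξ + 1) / ξ ^ 2) * σ ^ (-α))
  have h2 := (mono_top (α * (ξ + 1) + 1) α hα).const_mul ((1 / ξ ^ 2) * σ ^ (-α))
  have h3 := (mono_top (α * (ξ + 1) + ξ) α hα).const_mul (((ξ + 1) / ξ ^ 2) * σ ^ (-α))
  have h4 := (mono_top (α * (ξ + 1) + ξ + 1) α hα).const_mul ((1 / ξ ^ 2) * σ ^ (-α))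
  have h := ((((hl1.add hl2).sub h1).add h2).add h3).sub h4
  simp only [mul_zero, sub_zero, add_zero, zero_add] at h
  refine h.congr' ?_
  filter_upwards [eventually_gt_atTop (0:ℝ)] with u hu
  rw [Gxi, Real.rpow_add hu (α * (ξ + 1) + ξ) 1, Real.rpow_add hu (α * (ξ + 1)) ξ,
    Real.rpow_add hu (α * (ξ + 1)) 1, Real.rpow_one]
  field_simp
  ring

lemma hpow_cont (p : ℝ) : ContinuousOn (fun u : ℝ => u ^ p) (Set.Ioi 0) :=
  continuousOn_id.rpow_const (fun x hx => Or.inl (ne_of_gt hx))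

lemma hlog_cont : ContinuousOn Real.log (Set.Ioi 0) :=
  Real.continuousOn_log.mono (fun x hx => ne_of_gt hx)

lemma Gmu_cont (hα : 0 < α) (hσ : 0 < σ) (hξ : 0 < ξ) :
    ContinuousOn (Gmu α σ ξ) (Set.Ioi 0) := by
  have hexpc : Continuous fun u : ℝ => Real.exp (-(α * u)) := by continuity
  exact ((continuousOn_const.mul (hpow_cont ξ)).mul
    (continuousOn_const.sub continuousOn_id)).mul
    ((continuousOn_const.mul (hpow_cont (α * (ξ + 1)))).mul hexpc.continuousOn)

lemma Gsig_cont (hα : 0 < α) (hσ : 0 < σ) (hξ : 0 < ξ) :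
    ContinuousOn (Gsig α σ ξ) (Set.Ioi 0) := by
  have hexpc : Continuous fun u : ℝ => Real.exp (-(α * u)) := by continuity
  exact (continuousOn_const.add
    (((continuousOn_const.sub (hpow_cont ξ)).div_const _).mul
      (continuousOn_const.sub continuousOn_id))).mul
    ((continuousOn_const.mul (hpow_cont (α * (ξ + 1)))).mul hexpc.continuousOn)

lemma Gxi_cont (hα : 0 < α) (hσ : 0 < σ) (hξ : 0 < ξ) :
    ContinuousOn (Gxi α σ ξ) (Set.Ioi 0) := by
  have hexpc : Continuous fun u : ℝ => Real.exp (-(α * u)) := by continuity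
  exact (((continuousOn_const.mul (continuousOn_const.mul hlog_cont)).mul
    (continuousOn_const.sub continuousOn_id)).sub
    (((continuousOn_const.sub (hpow_cont ξ)).div_const _).mul
      (continuousOn_const.sub continuousOn_id))).mul
    ((continuousOn_const.mul (hpow_cont (α * (ξ + 1)))).mul hexpc.continuousOn)

end limits

/-- For `ξ > 0`, each score component times `f^α` is bounded on `(μ - σ/ξ, ∞)`. -/
theorem stmt_9 (α μ σ ξ : ℝ) (hα : 0 < α) (hσ : 0 < σ) (hξ : 0 < ξ) :
    (∃ C : ℝ, ∀ x ∈ Set.Ioi (μ - σ / ξ),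
      |scoreMu μ σ ξ x * gevDensity μ σ ξ x ^ α| ≤ C) ∧
    (∃ C : ℝ, ∀ x ∈ Set.Ioi (μ - σ / ξ),
      |scoreSigma μ σ ξ x * gevDensity μ σ ξ x ^ α| ≤ C) ∧
    (∃ C : ℝ, ∀ x ∈ Set.Ioi (μ - σ / ξ),
      |scoreXi μ σ ξ x * gevDensity μ σ ξ x ^ α| ≤ C) := by
  set a := μ - σ / ξ with ha
  have hξ' : ξ ≠ 0 := hξ.ne'
  have hσ' : σ ≠ 0 := hσ.ne'
  have hTcont : Continuous fun x => gevT' μ σ ξ x := by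
    unfold gevT'; continuity
  have htpos : ∀ x ∈ Set.Ioi a, 0 < gevT' μ σ ξ x := by
    intro x hx
    have hx' : μ - σ / ξ < x := hx
    have hc : ξ * (σ / ξ) = σ := by field_simp
    have h1 : 0 < σ + ξ * (x - μ) := by nlinarith [mul_pos hξ (show (0:ℝ) < x - μ + σ / ξ by linarith)]
    have : gevT' μ σ ξ x = (σ + ξ * (x - μ)) / σ := by rw [gevT']; field_simp
    rw [this]
    exact div_pos h1 hσ
  have hTa : gevT' μ σ ξ a = 0 := by
    rw [gevT', ha]; field_simp; ring
  have hT0 : Tendsto (fun x => gevT' μ σ ξ x) (𝓝[>] a) (𝓝[>] (0:ℝ)) := by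
    refine tendsto_nhdsWithin_iff.mpr ⟨?_, ?_⟩
    · simpa [hTa] using (hTcont.tendsto a).mono_left (nhdsWithin_le_nhds (s := Set.Ioi a))
    · exact eventually_mem_nhdsWithin.mono (fun x hx => htpos x hx)
  have hT_top : Tendsto (fun x => gevT' μ σ ξ x) atTop atTop := by
    refine tendsto_atTop_atTop.mpr (fun b => ⟨σ * (b - 1) / ξ + μ, fun x hx => ?_⟩)
    have h1 : σ * (b - 1) / ξ ≤ x - μ := by linarith
    have h1' : σ * (b - 1) ≤ (x - μ) * ξ := (div_le_iff₀ hξ).mp h1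
    have h2 : (b - 1) / ξ ≤ (x - μ) / σ := (div_le_div_iff₀ hξ hσ).mpr (by linarith)
    have h3 : b - 1 ≤ ξ * ((x - μ) / σ) := by
      calc b - 1 = ξ * ((b - 1) / ξ) := by field_simp
        _ ≤ ξ * ((x - μ) / σ) := mul_le_mul_of_nonneg_left h2 hξ.le
    rw [gevT']
    linarith
  have hU_c : ContinuousOn (fun x => gevU μ σ ξ x) (Set.Ioi a) :=
    hTcont.continuousOn.rpow_const (fun x hx => Or.inl (htpos x hx).ne')
  have hU_pos : ∀ x ∈ Set.Ioi a, 0 < gevU μ σ ξ x := fun x hx => gevU_pos (htpos x hx)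
  have hU_a : Tendsto (fun x => gevU μ σ ξ x) (𝓝[>] a) atTop := by
    have h2 : Tendsto (fun t : ℝ => t ^ (-1 / ξ)) (𝓝[>] (0:ℝ)) atTop := by
      refine ((tendsto_rpow_atTop (y := 1 / ξ) (by positivity)).comp
        tendsto_inv_nhdsGT_zero).congr' ?_
      filter_upwards [eventually_mem_nhdsWithin] with t ht
      have ht' : (0:ℝ) < t := ht
      show (t⁻¹) ^ (1 / ξ) = t ^ (-1 / ξ)
      rw [neg_div, Real.rpow_neg ht'.le, Real.inv_rpow ht'.le]
    exact h2.comp hT0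
  have hU_top : Tendsto (fun x => gevU μ σ ξ x) atTop (𝓝[>] (0:ℝ)) := by
    refine tendsto_nhdsWithin_iff.mpr ⟨?_, ?_⟩
    · have := (tendsto_rpow_neg_atTop (y := 1 / ξ) (by positivity)).comp hT_top
      refine this.congr (fun x => ?_)
      show gevT' μ σ ξ x ^ (-(1 / ξ)) = gevU μ σ ξ x
      rw [gevU, neg_div]
    · filter_upwards [hT_top.eventually_gt_atTop 0] with x hx
      exact Real.rpow_pos_of_pos hx _
  refine ⟨?_, ?_, ?_⟩
  · exact bdd_of_rep hU_c hU_pos hU_a hU_top (Gmu_cont hα hσ hξ) (Gmu_zero hα hσ hξ)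
      (Gmu_top hα hσ hξ) (fun x hx => scoreMu_eq hα hσ hξ (htpos x hx))
  · exact bdd_of_rep hU_c hU_pos hU_a hU_top (Gsig_cont hα hσ hξ) (Gsig_zero hα hσ hξ)
      (Gsig_top hα hσ hξ) (fun x hx => scoreSigma_eq hα hσ hξ (htpos x hx))
  · exact bdd_of_rep hU_c hU_pos hU_a hU_top (Gxi_cont hα hσ hξ) (Gxi_zero hα hσ hξ)
      (Gxi_top hα hσ hξ) (fun x hx => scoreXi_eq hα hσ hξ (htpos x hx))
end

section
/- Let α > 0, μ ∈ ℝ, σ > 0 and ξ < 0 with ξ ≥ −α/(1+α). Then each of the three functions x ↦ S_μ(x) · f(x; μ,σ,ξ)^α, x ↦ S_σ(x) · f(x; μ,σ,ξ)^α, and x ↦ S_ξ(x) · f(x; μ,σ,ξ)^α is bounded on the open interval (−∞, μ − σ/ξ). -/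
open MeasureTheory Real

lemma gev_tpos (μ σ ξ x : ℝ) (hσ : 0 < σ) (hξ : ξ < 0) (hx : x < μ - σ / ξ) :
    0 < gevT μ σ ξ x := by
  have h0 : x - μ < -(σ / ξ) := by linarith
  have h1 : ξ * (-(σ / ξ)) < ξ * (x - μ) := mul_lt_mul_of_neg_left h0 hξ
  have h2 : ξ * (-(σ / ξ)) = -σ := by field_simp [hξ.ne]
  have h3 : ξ * ((x - μ) / σ) * σ = ξ * (x - μ) := by field_simp
  simp only [gevT]
  nlinarith [h1, h2, h3, hσ]

lemma gev_density_pow (α μ σ ξ x : ℝ) (hσ : 0 < σ) (hξ0 : ξ ≠ 0)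
    (ht : 0 < gevT μ σ ξ x) :
    gevDensity μ σ ξ x ^ α =
      σ⁻¹ ^ α * ((gevT μ σ ξ x ^ (-1 / ξ)) ^ (α * (1 + ξ)) *
        Real.exp (-(α * gevT μ σ ξ x ^ (-1 / ξ)))) := by
  rw [gevDensity, if_pos ht]
  rw [Real.mul_rpow (by positivity) (Real.exp_pos _).le,
    Real.mul_rpow (by positivity) (by positivity)]
  have h1 : (gevT μ σ ξ x ^ (-(ξ + 1) / ξ)) ^ α
      = (gevT μ σ ξ x ^ (-1 / ξ)) ^ (α * (1 + ξ)) := by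
    rw [← Real.rpow_mul ht.le, ← Real.rpow_mul ht.le]
    congr 1
    field_simp
    ring
  have h2 : Real.exp (-(gevT μ σ ξ x ^ (-1 / ξ))) ^ α
      = Real.exp (-(α * gevT μ σ ξ x ^ (-1 / ξ))) := by
    rw [← Real.exp_mul]
    congr 1
    ring
  rw [h1, h2]
  ring

lemma gev_tinv (μ σ ξ x : ℝ) (hξ0 : ξ ≠ 0) (ht : 0 < gevT μ σ ξ x) :
    (gevT μ σ ξ x ^ (-1 / ξ)) ^ ξ = (gevT μ σ ξ x)⁻¹ := by
  rw [← Real.rpow_mul ht.le, show -1 / ξ * ξ = -1 by field_simp,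
    Real.rpow_neg ht.le, Real.rpow_one]

open Real

lemma gev_b1 (p c s : ℝ) (hp : 0 ≤ p) (hc : 0 < c) (hs : 0 < s) :
    s ^ p * Real.exp (-(c * s)) ≤ (p / c) ^ p := by
  rcases eq_or_lt_of_le hp with h | hp
  · rw [← h, Real.rpow_zero, Real.rpow_zero, one_mul]
    exact Real.exp_le_one_iff.mpr (by nlinarith [mul_pos hc hs])
  · have hpc : (0:ℝ) < p / c := div_pos hp hc
    rw [Real.rpow_def_of_pos hs, Real.rpow_def_of_pos hpc, ← Real.exp_add, Real.exp_le_exp]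
    have h1 : Real.log (s / (p / c)) ≤ s / (p / c) - 1 :=
      Real.log_le_sub_one_of_pos (div_pos hs hpc)
    have h2 : p * Real.log (s / (p / c)) = p * Real.log s - p * Real.log (p / c) := by
      rw [Real.log_div hs.ne' hpc.ne']; ring
    have h3 : p * (s / (p / c)) = c * s := by field_simp
    nlinarith [mul_le_mul_of_nonneg_left h1 hp.le]

lemma gev_blog (q s : ℝ) (hq : 0 < q) (hs : 0 < s) :
    |Real.log s| ≤ q⁻¹ * s ^ (-q) + s := by
  have h1 : Real.log s ≤ s - 1 := Real.log_le_sub_one_of_pos hs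
  have h2 : Real.log (s ^ (-q)) ≤ s ^ (-q) - 1 :=
    Real.log_le_sub_one_of_pos (Real.rpow_pos_of_pos hs _)
  rw [Real.log_rpow hs] at h2
  have h3 : (0:ℝ) < s ^ (-q) := Real.rpow_pos_of_pos hs _
  rw [abs_le]
  constructor
  · have h5 : -q * Real.log s ≤ s ^ (-q) := by linarith
    have h4 : -Real.log s ≤ q⁻¹ * s ^ (-q) := by
      calc -Real.log s = (-q * Real.log s) / q := by field_simp
        _ ≤ s ^ (-q) / q := by gcongr
        _ = q⁻¹ * s ^ (-q) := by ring
    linarith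
  · have h6 : (0:ℝ) ≤ q⁻¹ * s ^ (-q) := by positivity
    linarith

lemma gev_b2 (q c s : ℝ) (hq : 0 < q) (hc : 0 < c) (hs : 0 < s) :
    |Real.log s| * (s ^ q * Real.exp (-(c * s))) ≤ q⁻¹ + ((q + 1) / c) ^ (q + 1) := by
  have key : s ^ (-q) * s ^ q = 1 := by
    rw [← Real.rpow_add hs]; simp
  have h1 := gev_blog q s hq hs
  have h2 := gev_b1 (q + 1) c s (by linarith) hc hs
  have hsq : s * s ^ q = s ^ (q + 1) := by
    rw [Real.rpow_add_one hs.ne']; ring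
  have hE1 : Real.exp (-(c * s)) ≤ 1 :=
    Real.exp_le_one_iff.mpr (by nlinarith [mul_pos hc hs])
  calc |Real.log s| * (s ^ q * Real.exp (-(c * s)))
      ≤ (q⁻¹ * s ^ (-q) + s) * (s ^ q * Real.exp (-(c * s))) :=
        mul_le_mul_of_nonneg_right h1 (by positivity)
    _ = q⁻¹ * (s ^ (-q) * s ^ q) * Real.exp (-(c * s)) + s ^ (q + 1) * Real.exp (-(c * s)) := by
        rw [← hsq]; ring
    _ ≤ q⁻¹ + ((q + 1) / c) ^ (q + 1) := by
        rw [key]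
        have : q⁻¹ * 1 * Real.exp (-(c * s)) ≤ q⁻¹ := by
          nlinarith [inv_pos.mpr hq, Real.exp_pos (-(c * s))]
        linarith

lemma gev_affine (u v e c s : ℝ) (he : 0 ≤ e) (hc : 0 < c) (hs : 0 < s) :
    |(u + v * s) * (s ^ e * Real.exp (-(c * s)))| ≤
      |u| * (e / c) ^ e + |v| * ((e + 1) / c) ^ (e + 1) := by
  have hpos : (0:ℝ) ≤ s ^ e * Real.exp (-(c * s)) := by positivity
  rw [abs_mul, abs_of_nonneg hpos]
  have h1 : |u + v * s| ≤ |u| + |v| * s := by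
    calc |u + v * s| ≤ |u| + |v * s| := abs_add_le _ _
      _ = |u| + |v| * s := by rw [abs_mul, abs_of_pos hs]
  have hsq : s * s ^ e = s ^ (e + 1) := by rw [Real.rpow_add_one hs.ne']; ring
  calc |u + v * s| * (s ^ e * Real.exp (-(c * s)))
      ≤ (|u| + |v| * s) * (s ^ e * Real.exp (-(c * s))) := mul_le_mul_of_nonneg_right h1 hpos
    _ = |u| * (s ^ e * Real.exp (-(c * s))) + |v| * (s ^ (e + 1) * Real.exp (-(c * s))) := by
        rw [← hsq]; ring
    _ ≤ |u| * ((e / c) ^ e) + |v| * (((e + 1) / c) ^ (e + 1)) :=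
        add_le_add
          (mul_le_mul_of_nonneg_left (gev_b1 e c s he hc hs) (abs_nonneg _))
          (mul_le_mul_of_nonneg_left (gev_b1 (e + 1) c s (by linarith) hc hs) (abs_nonneg _))

lemma gev_logaffine (e c s : ℝ) (he : 0 < e) (hc : 0 < c) (hs : 0 < s) :
    |Real.log s * (1 - s) * (s ^ e * Real.exp (-(c * s)))| ≤
      (e⁻¹ + ((e + 1) / c) ^ (e + 1)) + ((e + 1)⁻¹ + ((e + 2) / c) ^ (e + 2)) := by
  have hpos : (0:ℝ) ≤ s ^ e * Real.exp (-(c * s)) := by positivity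
  have hsq : s * s ^ e = s ^ (e + 1) := by rw [Real.rpow_add_one hs.ne']; ring
  rw [abs_mul, abs_mul, abs_of_nonneg hpos]
  have h1 : |1 - s| ≤ 1 + s := abs_le.mpr ⟨by linarith, by linarith⟩
  calc |Real.log s| * |1 - s| * (s ^ e * Real.exp (-(c * s)))
      ≤ |Real.log s| * (1 + s) * (s ^ e * Real.exp (-(c * s))) :=
        mul_le_mul_of_nonneg_right
          (mul_le_mul_of_nonneg_left h1 (abs_nonneg _)) hpos
    _ = |Real.log s| * (s ^ e * Real.exp (-(c * s)))
        + |Real.log s| * (s ^ (e + 1) * Real.exp (-(c * s))) := by rw [← hsq]; ring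
    _ ≤ (e⁻¹ + ((e + 1) / c) ^ (e + 1)) + ((e + 1)⁻¹ + ((e + 2) / c) ^ (e + 2)) := by
        refine add_le_add (gev_b2 e c s he hc hs) ?_
        have := gev_b2 (e + 1) c s (by linarith) hc hs
        rw [show e + 1 + 1 = e + 2 by ring] at this
        exact this

lemma gev_comb (k X Y Z DX DY DZ : ℝ) (h1 : |X| ≤ DX) (h2 : |Y| ≤ DY) (h3 : |Z| ≤ DZ) :
    |X + k * (Y + Z)| ≤ DX + |k| * (DY + DZ) := by
  calc |X + k * (Y + Z)| ≤ |X| + |k * (Y + Z)| := abs_add_le _ _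
    _ = |X| + |k| * |Y + Z| := by rw [abs_mul]
    _ ≤ |X| + |k| * (|Y| + |Z|) :=
        add_le_add le_rfl (mul_le_mul_of_nonneg_left (abs_add_le _ _) (abs_nonneg _))
    _ ≤ DX + |k| * (DY + DZ) :=
        add_le_add h1 (mul_le_mul_of_nonneg_left (add_le_add h2 h3) (abs_nonneg _))

lemma gev_comb2 (k1 k2 L Y Z DL DY DZ : ℝ) (h1 : |L| ≤ DL) (h2 : |Y| ≤ DY) (h3 : |Z| ≤ DZ) :
    |k1 * L + k2 * (Y + Z)| ≤ |k1| * DL + |k2| * (DY + DZ) := by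
  calc |k1 * L + k2 * (Y + Z)| ≤ |k1 * L| + |k2 * (Y + Z)| := abs_add_le _ _
    _ = |k1| * |L| + |k2| * |Y + Z| := by rw [abs_mul, abs_mul]
    _ ≤ |k1| * DL + |k2| * (|Y| + |Z|) :=
        add_le_add (mul_le_mul_of_nonneg_left h1 (abs_nonneg _))
          (mul_le_mul_of_nonneg_left (abs_add_le _ _) (abs_nonneg _))
    _ ≤ |k1| * DL + |k2| * (DY + DZ) :=
        add_le_add le_rfl (mul_le_mul_of_nonneg_left (add_le_add h2 h3) (abs_nonneg _))

/-- For `ξ < 0` with `ξ ≥ -α/(1+α)`, each score component times `f^α` is bounded on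
`(-∞, μ - σ/ξ)`. -/
theorem stmt_10 (α μ σ ξ : ℝ) (hα : 0 < α) (hσ : 0 < σ) (hξ : ξ < 0)
    (hξα : ξ ≥ -α / (1 + α)) :
    (∃ C : ℝ, ∀ x ∈ Set.Iio (μ - σ / ξ),
      |scoreMu μ σ ξ x * gevDensity μ σ ξ x ^ α| ≤ C) ∧
    (∃ C : ℝ, ∀ x ∈ Set.Iio (μ - σ / ξ),
      |scoreSigma μ σ ξ x * gevDensity μ σ ξ x ^ α| ≤ C) ∧
    (∃ C : ℝ, ∀ x ∈ Set.Iio (μ - σ / ξ),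
      |scoreXi μ σ ξ x * gevDensity μ σ ξ x ^ α| ≤ C) := by
  have hξ0 : ξ ≠ 0 := hξ.ne
  have h1α : (0:ℝ) < 1 + α := by linarith
  have hξ1 : 0 < ξ + 1 := by
    have : (-1 : ℝ) < -α / (1 + α) := by
      rw [lt_div_iff₀ h1α]; linarith
    linarith
  have hP : 0 ≤ α * (1 + ξ) + ξ := by
    have h2 : -α ≤ ξ * (1 + α) := (div_le_iff₀ h1α).mp hξα
    nlinarith
  have hA : 0 < α * (1 + ξ) := by nlinarith
  refine ⟨⟨(σ⁻¹ ^ α * σ⁻¹) * (|ξ + 1| * ((α * (1 + ξ) + ξ) / α) ^ (α * (1 + ξ) + ξ)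
      + |(-1 : ℝ)| * ((α * (1 + ξ) + ξ + 1) / α) ^ (α * (1 + ξ) + ξ + 1)), ?_⟩,
    ⟨(σ⁻¹ ^ α * σ⁻¹) * ((|(-1 : ℝ)| * ((α * (1 + ξ)) / α) ^ (α * (1 + ξ))
        + |(0 : ℝ)| * ((α * (1 + ξ) + 1) / α) ^ (α * (1 + ξ) + 1))
      + |ξ⁻¹| * ((|ξ + 1| * ((α * (1 + ξ)) / α) ^ (α * (1 + ξ))
          + |(-1 : ℝ)| * ((α * (1 + ξ) + 1) / α) ^ (α * (1 + ξ) + 1))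
        + (|(-(ξ + 1))| * ((α * (1 + ξ) + ξ) / α) ^ (α * (1 + ξ) + ξ)
          + |(1 : ℝ)| * ((α * (1 + ξ) + ξ + 1) / α) ^ (α * (1 + ξ) + ξ + 1)))), ?_⟩,
    ⟨σ⁻¹ ^ α * (|(-ξ⁻¹)| * (((α * (1 + ξ))⁻¹
          + ((α * (1 + ξ) + 1) / α) ^ (α * (1 + ξ) + 1))
        + ((α * (1 + ξ) + 1)⁻¹ + ((α * (1 + ξ) + 2) / α) ^ (α * (1 + ξ) + 2)))
      + |(-(ξ ^ 2)⁻¹)| * ((|ξ + 1| * ((α * (1 + ξ)) / α) ^ (α * (1 + ξ))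
          + |(-1 : ℝ)| * ((α * (1 + ξ) + 1) / α) ^ (α * (1 + ξ) + 1))
        + (|(-(ξ + 1))| * ((α * (1 + ξ) + ξ) / α) ^ (α * (1 + ξ) + ξ)
          + |(1 : ℝ)| * ((α * (1 + ξ) + ξ + 1) / α) ^ (α * (1 + ξ) + ξ + 1)))), ?_⟩⟩
  · intro x hx
    have ht : 0 < gevT μ σ ξ x := gev_tpos μ σ ξ x hσ hξ hx
    have hs : 0 < gevT μ σ ξ x ^ (-1 / ξ) := Real.rpow_pos_of_pos ht _
    have hsplit : (gevT μ σ ξ x ^ (-1 / ξ)) ^ (α * (1 + ξ) + ξ)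
        = (gevT μ σ ξ x ^ (-1 / ξ)) ^ (α * (1 + ξ)) * (gevT μ σ ξ x)⁻¹ := by
      rw [Real.rpow_add hs, gev_tinv μ σ ξ x hξ0 ht]
    have heq : scoreMu μ σ ξ x * gevDensity μ σ ξ x ^ α =
        (σ⁻¹ ^ α * σ⁻¹) * (((ξ + 1) + (-1) * gevT μ σ ξ x ^ (-1 / ξ)) *
          ((gevT μ σ ξ x ^ (-1 / ξ)) ^ (α * (1 + ξ) + ξ) *
            Real.exp (-(α * gevT μ σ ξ x ^ (-1 / ξ))))) := by
      rw [gev_density_pow α μ σ ξ x hσ hξ0 ht]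
      simp only [scoreMu]
      rw [hsplit, mul_inv]
      ring
    rw [heq, abs_mul, abs_of_nonneg (by positivity : (0:ℝ) ≤ σ⁻¹ ^ α * σ⁻¹)]
    exact mul_le_mul_of_nonneg_left
      (gev_affine (ξ + 1) (-1) (α * (1 + ξ) + ξ) α _ hP hα hs) (by positivity)
  · intro x hx
    have ht : 0 < gevT μ σ ξ x := gev_tpos μ σ ξ x hσ hξ hx
    have hs : 0 < gevT μ σ ξ x ^ (-1 / ξ) := Real.rpow_pos_of_pos ht _
    have hsplit : (gevT μ σ ξ x ^ (-1 / ξ)) ^ (α * (1 + ξ) + ξ)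
        = (gevT μ σ ξ x ^ (-1 / ξ)) ^ (α * (1 + ξ)) * (gevT μ σ ξ x)⁻¹ := by
      rw [Real.rpow_add hs, gev_tinv μ σ ξ x hξ0 ht]
    have hC : x - μ = σ * (gevT μ σ ξ x - 1) / ξ := by
      simp only [gevT]; field_simp; ring
    have heq : scoreSigma μ σ ξ x * gevDensity μ σ ξ x ^ α =
        (σ⁻¹ ^ α * σ⁻¹) * ((((-1 : ℝ)) + 0 * gevT μ σ ξ x ^ (-1 / ξ)) *
            ((gevT μ σ ξ x ^ (-1 / ξ)) ^ (α * (1 + ξ)) *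
              Real.exp (-(α * gevT μ σ ξ x ^ (-1 / ξ))))
          + ξ⁻¹ * (((ξ + 1) + (-1) * gevT μ σ ξ x ^ (-1 / ξ)) *
              ((gevT μ σ ξ x ^ (-1 / ξ)) ^ (α * (1 + ξ)) *
                Real.exp (-(α * gevT μ σ ξ x ^ (-1 / ξ))))
            + ((-(ξ + 1)) + 1 * gevT μ σ ξ x ^ (-1 / ξ)) *
              ((gevT μ σ ξ x ^ (-1 / ξ)) ^ (α * (1 + ξ) + ξ) *
                Real.exp (-(α * gevT μ σ ξ x ^ (-1 / ξ)))))) := by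
      rw [gev_density_pow α μ σ ξ x hσ hξ0 ht]
      simp only [scoreSigma]
      rw [hC, hsplit]
      field_simp
      ring
    rw [heq, abs_mul, abs_of_nonneg (by positivity : (0:ℝ) ≤ σ⁻¹ ^ α * σ⁻¹)]
    exact mul_le_mul_of_nonneg_left
      (gev_comb ξ⁻¹ _ _ _ _ _ _ (gev_affine (-1) 0 (α * (1 + ξ)) α _ hA.le hα hs)
        (gev_affine (ξ + 1) (-1) (α * (1 + ξ)) α _ hA.le hα hs)
        (gev_affine (-(ξ + 1)) 1 (α * (1 + ξ) + ξ) α _ hP hα hs)) (by positivity)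
  · intro x hx
    have ht : 0 < gevT μ σ ξ x := gev_tpos μ σ ξ x hσ hξ hx
    have hs : 0 < gevT μ σ ξ x ^ (-1 / ξ) := Real.rpow_pos_of_pos ht _
    have hsplit : (gevT μ σ ξ x ^ (-1 / ξ)) ^ (α * (1 + ξ) + ξ)
        = (gevT μ σ ξ x ^ (-1 / ξ)) ^ (α * (1 + ξ)) * (gevT μ σ ξ x)⁻¹ := by
      rw [Real.rpow_add hs, gev_tinv μ σ ξ x hξ0 ht]
    have hC : x - μ = σ * (gevT μ σ ξ x - 1) / ξ := by
      simp only [gevT]; field_simp; ring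
    have hlog : Real.log (gevT μ σ ξ x)
        = -ξ * Real.log (gevT μ σ ξ x ^ (-1 / ξ)) := by
      rw [Real.log_rpow ht]; field_simp
    have heq : scoreXi μ σ ξ x * gevDensity μ σ ξ x ^ α =
        σ⁻¹ ^ α * ((-ξ⁻¹) * (Real.log (gevT μ σ ξ x ^ (-1 / ξ)) *
            (1 - gevT μ σ ξ x ^ (-1 / ξ)) *
            ((gevT μ σ ξ x ^ (-1 / ξ)) ^ (α * (1 + ξ)) *
              Real.exp (-(α * gevT μ σ ξ x ^ (-1 / ξ)))))
          + (-(ξ ^ 2)⁻¹) * (((ξ + 1) + (-1) * gevT μ σ ξ x ^ (-1 / ξ)) *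
              ((gevT μ σ ξ x ^ (-1 / ξ)) ^ (α * (1 + ξ)) *
                Real.exp (-(α * gevT μ σ ξ x ^ (-1 / ξ))))
            + ((-(ξ + 1)) + 1 * gevT μ σ ξ x ^ (-1 / ξ)) *
              ((gevT μ σ ξ x ^ (-1 / ξ)) ^ (α * (1 + ξ) + ξ) *
                Real.exp (-(α * gevT μ σ ξ x ^ (-1 / ξ)))))) := by
      rw [gev_density_pow α μ σ ξ x hσ hξ0 ht]
      simp only [scoreXi]
      rw [hC, hlog, hsplit]
      field_simp
      ring
    rw [heq, abs_mul, abs_of_nonneg (by positivity : (0:ℝ) ≤ σ⁻¹ ^ α)]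
    exact mul_le_mul_of_nonneg_left
      (gev_comb2 (-ξ⁻¹) (-(ξ ^ 2)⁻¹) _ _ _ _ _ _
        (gev_logaffine (α * (1 + ξ)) α _ hA hα hs)
        (gev_affine (ξ + 1) (-1) (α * (1 + ξ)) α _ hA.le hα hs)
        (gev_affine (-(ξ + 1)) 1 (α * (1 + ξ) + ξ) α _ hP hα hs)) (by positivity)
end

section
/- Let α > 0, μ ∈ ℝ, σ > 0 and ξ ≠ 0 with ξ > −(2α+1)/(2α+2). Then the integral over the support D of (S_μ(x)² + S_σ(x)² + S_ξ(x)²) · f(x; μ,σ,ξ)^{1+2α} is finite. -/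
open MeasureTheory Real

open Set


private lemma rpow_le_add' {s a p b : ℝ} (hs : 0 < s) (h1 : a ≤ p) (h2 : p ≤ b) :
    s ^ p ≤ s ^ a + s ^ b := by
  rcases le_total s 1 with h | h
  · linarith [Real.rpow_le_rpow_of_exponent_ge hs h h1, (Real.rpow_pos_of_pos hs b).le]
  · linarith [Real.rpow_le_rpow_of_exponent_le h h2, (Real.rpow_pos_of_pos hs a).le]

private lemma integrable_majorant' {a : ℝ} (ha : -1 < a) :
    IntegrableOn (fun s => s ^ a * Real.exp (-s)) (Ioi (0:ℝ)) := by
  refine (Real.GammaIntegral_convergent (s := a + 1) (by linarith)).congr_fun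
    (fun x hx => ?_) measurableSet_Ioi
  simp [add_sub_cancel_right, mul_comm]

private lemma abs_log_le' {s ε : ℝ} (hs : 0 < s) (hε : 0 < ε) :
    |Real.log s| ≤ (s ^ ε + s ^ (-ε)) / ε := by
  have key : ∀ t : ℝ, 0 < t → Real.log t ≤ t ^ ε / ε := by
    intro t ht
    have h1 := Real.log_le_sub_one_of_pos (Real.rpow_pos_of_pos ht ε)
    rw [Real.log_rpow ht] at h1
    rw [le_div_iff₀ hε]
    nlinarith [Real.rpow_pos_of_pos ht ε]
  have hpos1 := Real.rpow_pos_of_pos hs ε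
  have hpos2 := Real.rpow_pos_of_pos hs (-ε)
  rcases abs_cases (Real.log s) with ⟨h, _⟩ | ⟨h, _⟩
  · rw [h]
    calc Real.log s ≤ s ^ ε / ε := key s hs
      _ ≤ (s ^ ε + s ^ (-ε)) / ε := by gcongr; linarith
  · rw [h, ← Real.log_inv]
    calc Real.log s⁻¹ ≤ (s⁻¹) ^ ε / ε := key _ (inv_pos.2 hs)
      _ = s ^ (-ε) / ε := by rw [Real.inv_rpow hs.le, ← Real.rpow_neg hs.le]
      _ ≤ (s ^ ε + s ^ (-ε)) / ε := by gcongr; linarith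

private lemma poly_bound' {s p a b : ℝ} (hs : 0 < s) (h1 : a ≤ p) (h2 : p + 2 ≤ b) :
    s ^ p * (1 + s) ^ 2 ≤ 4 * (s ^ a + s ^ b) := by
  have e2 : s ^ (p + 2) = s ^ p * s ^ (2:ℕ) := by
    rw [Real.rpow_add hs, show (2:ℝ) = ((2:ℕ):ℝ) by norm_num, Real.rpow_natCast]
  have hp := Real.rpow_pos_of_pos hs p
  have w1 := rpow_le_add' hs h1 (by linarith : p ≤ b)
  have w2 := rpow_le_add' hs (by linarith : a ≤ p + 2) h2
  have key : s ^ p * (1 + s) ^ 2 ≤ 2 * s ^ p + 2 * s ^ (p + 2) := by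
    rw [e2]; nlinarith [mul_nonneg hp.le (sq_nonneg (1 - s))]
  linarith

private lemma master' {s β q a b K X : ℝ} (hs : 0 < s) (hK : 0 ≤ K)
    (hX : |X| ≤ K * s ^ q * (1 + s)) (h1 : a ≤ β + 2 * q) (h2 : β + 2 * q + 2 ≤ b) :
    s ^ β * X ^ 2 ≤ 4 * K ^ 2 * (s ^ a + s ^ b) := by
  have hq := Real.rpow_pos_of_pos hs q
  have hsq : s ^ (β + 2 * q) = s ^ β * (s ^ q * s ^ q) := by
    rw [show β + 2 * q = β + (q + q) by ring, Real.rpow_add hs, Real.rpow_add hs]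
  have h3 : X ^ 2 ≤ (K * s ^ q * (1 + s)) ^ 2 := by
    rw [← sq_abs X]; exact pow_le_pow_left₀ (abs_nonneg X) hX 2
  have h4 := poly_bound' hs h1 h2
  have h5 := (Real.rpow_pos_of_pos hs β).le
  calc s ^ β * X ^ 2 ≤ s ^ β * (K * s ^ q * (1 + s)) ^ 2 := mul_le_mul_of_nonneg_left h3 h5
    _ = K ^ 2 * (s ^ (β + 2 * q) * (1 + s) ^ 2) := by rw [hsq]; ring
    _ ≤ K ^ 2 * (4 * (s ^ a + s ^ b)) := mul_le_mul_of_nonneg_left h4 (by positivity)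
    _ = 4 * K ^ 2 * (s ^ a + s ^ b) := by ring

private lemma master_log' {s β ε a b K X : ℝ} (hs : 0 < s) (hε : 0 < ε) (hK : 0 ≤ K)
    (hX : |X| ≤ K * |Real.log s| * (1 + s)) (h1 : a ≤ β - 2 * ε) (h2 : β + 2 * ε + 2 ≤ b) :
    s ^ β * X ^ 2 ≤ 16 * (K / ε) ^ 2 * (s ^ a + s ^ b) := by
  have hL := abs_log_le' hs hε
  have hu := Real.rpow_pos_of_pos hs ε
  have hv := Real.rpow_pos_of_pos hs (-ε)
  have hβn := (Real.rpow_pos_of_pos hs β).le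
  have hXle : |X| ≤ K * ((s ^ ε + s ^ (-ε)) / ε) * (1 + s) := by
    calc |X| ≤ K * |Real.log s| * (1 + s) := hX
      _ ≤ K * ((s ^ ε + s ^ (-ε)) / ε) * (1 + s) := by gcongr
  have h3 : X ^ 2 ≤ (K / ε) ^ 2 * ((s ^ ε + s ^ (-ε)) * (1 + s)) ^ 2 := by
    rw [← sq_abs X]
    calc |X| ^ 2 ≤ (K * ((s ^ ε + s ^ (-ε)) / ε) * (1 + s)) ^ 2 :=
          pow_le_pow_left₀ (abs_nonneg X) hXle 2
      _ = (K / ε) ^ 2 * ((s ^ ε + s ^ (-ε)) * (1 + s)) ^ 2 := by ring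
  have hu2 : s ^ β * (s ^ ε * s ^ ε) = s ^ (β + 2 * ε) := by
    rw [← Real.rpow_add hs, ← Real.rpow_add hs]; ring_nf
  have hv2 : s ^ β * (s ^ (-ε) * s ^ (-ε)) = s ^ (β - 2 * ε) := by
    rw [← Real.rpow_add hs, ← Real.rpow_add hs]; ring_nf
  have step2 : (s ^ ε + s ^ (-ε)) ^ 2 ≤ 2 * (s ^ ε * s ^ ε) + 2 * (s ^ (-ε) * s ^ (-ε)) := by
    nlinarith [sq_nonneg (s ^ ε - s ^ (-ε))]
  have p1 := poly_bound' hs (le_trans h1 (by linarith) : a ≤ β + 2 * ε) h2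
  have p2 := poly_bound' hs h1 (by linarith : β - 2 * ε + 2 ≤ b)
  calc s ^ β * X ^ 2
      ≤ s ^ β * ((K / ε) ^ 2 * ((s ^ ε + s ^ (-ε)) * (1 + s)) ^ 2) :=
        mul_le_mul_of_nonneg_left h3 hβn
    _ = (K / ε) ^ 2 * ((s ^ ε + s ^ (-ε)) ^ 2 * (s ^ β * (1 + s) ^ 2)) := by ring
    _ ≤ (K / ε) ^ 2 * ((2 * (s ^ ε * s ^ ε) + 2 * (s ^ (-ε) * s ^ (-ε))) * (s ^ β * (1 + s) ^ 2)) := by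
        have hnn : (0:ℝ) ≤ s ^ β * (1 + s) ^ 2 := by positivity
        exact mul_le_mul_of_nonneg_left (mul_le_mul_of_nonneg_right step2 hnn) (by positivity)
    _ = 2 * (K / ε) ^ 2 * ((s ^ β * (s ^ ε * s ^ ε)) * (1 + s) ^ 2)
        + 2 * (K / ε) ^ 2 * ((s ^ β * (s ^ (-ε) * s ^ (-ε))) * (1 + s) ^ 2) := by ring
    _ ≤ 2 * (K / ε) ^ 2 * (4 * (s ^ a + s ^ b)) + 2 * (K / ε) ^ 2 * (4 * (s ^ a + s ^ b)) := by
        rw [hu2, hv2]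
        exact add_le_add (mul_le_mul_of_nonneg_left p1 (by positivity))
          (mul_le_mul_of_nonneg_left p2 (by positivity))
    _ = 16 * (K / ε) ^ 2 * (s ^ a + s ^ b) := by ring

private lemma piece_bound' {s ξ q C : ℝ} (hs : 0 < s) :
    |C * s ^ q * (ξ + 1 - s)| ≤ (|C| * (|ξ| + 1)) * s ^ q * (1 + s) := by
  have hq := Real.rpow_pos_of_pos hs q
  have hcore : |ξ + 1 - s| ≤ (|ξ| + 1) * (1 + s) := by
    have h0 : |ξ + 1 - s| ≤ |ξ + 1| + |s| := abs_sub (ξ + 1) s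
    have h1 : |ξ + 1| ≤ |ξ| + 1 := by
      calc |ξ + 1| ≤ |ξ| + |(1:ℝ)| := abs_add_le ξ 1
        _ = |ξ| + 1 := by rw [abs_one]
    rw [abs_of_pos hs] at h0
    nlinarith [abs_nonneg ξ]
  calc |C * s ^ q * (ξ + 1 - s)| = |C| * s ^ q * |ξ + 1 - s| := by
        rw [abs_mul, abs_mul, abs_of_pos hq]
    _ ≤ |C| * s ^ q * ((|ξ| + 1) * (1 + s)) := by
        exact mul_le_mul_of_nonneg_left hcore (by positivity)
    _ = (|C| * (|ξ| + 1)) * s ^ q * (1 + s) := by ring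

private lemma three_sq' (x y z : ℝ) : (x + y + z) ^ 2 ≤ 3 * (x ^ 2 + y ^ 2 + z ^ 2) := by
  nlinarith [sq_nonneg (x - y), sq_nonneg (x - z), sq_nonneg (y - z)]

private noncomputable def Hfun (σ ξ α β s : ℝ) : ℝ :=
  σ ^ (-(2*α)) * s ^ β * Real.exp (-((1+2*α)*s)) *
    ((σ⁻¹ * s ^ ξ * (ξ+1-s))^2 + (σ⁻¹ * (-1 + (1 - s ^ ξ)*(ξ+1-s)/ξ))^2 +
     (-(Real.log s)*(1-s)/ξ - (1 - s ^ ξ)*(ξ+1-s)/ξ^2)^2)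

set_option maxHeartbeats 2000000 in
private lemma Hfun_integrable {σ ξ α β : ℝ} (hσ : 0 < σ) (hξ0 : ξ ≠ 0) (hα : 0 < α)
    (hξ1 : -1 < ξ) (hβdef : β = 2*α*(ξ+1)) (hm1 : -1 < β + 2 * min ξ 0) :
    IntegrableOn (Hfun σ ξ α β) (Ioi 0) := by
  have hβpos : 0 < β := by nlinarith
  set ε : ℝ := (β + 2 * min ξ 0 + 1) / 4 with hεdef
  have hεpos : 0 < ε := by rw [hεdef]; linarith
  set a : ℝ := β + 2 * min ξ 0 - 2 * ε with hadef
  set b : ℝ := β + 2 * |ξ| + 2 * ε + 2 with hbdef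
  have hminξ : min ξ 0 ≤ ξ := min_le_left ξ 0
  have hmin0 : min ξ 0 ≤ 0 := min_le_right ξ 0
  have habsξ : ξ ≤ |ξ| := le_abs_self ξ
  have habsnn : (0:ℝ) ≤ |ξ| := abs_nonneg ξ
  have ha1 : -1 < a := by rw [hadef, hεdef]; linarith
  have hb1 : -1 < b := by rw [hbdef]; linarith
  have haβ : a ≤ β + 2 * 0 := by rw [hadef]; linarith
  have haβξ : a ≤ β + 2 * ξ := by rw [hadef]; linarith
  have haε : a ≤ β - 2 * ε := by rw [hadef]; linarith
  have hbβ : β + 2 * 0 + 2 ≤ b := by rw [hbdef]; linarith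
  have hbβξ : β + 2 * ξ + 2 ≤ b := by rw [hbdef]; linarith
  have hbε : β + 2 * ε + 2 ≤ b := by rw [hbdef]; linarith
  set K1 : ℝ := |σ⁻¹| * (|ξ| + 1) with hK1
  set K0 : ℝ := σ⁻¹ with hK0
  set K2 : ℝ := |σ⁻¹ / ξ| * (|ξ| + 1) with hK2
  set K3 : ℝ := |1 / ξ ^ 2| * (|ξ| + 1) with hK3
  set KL : ℝ := 1 / |ξ| with hKL
  set Ctot : ℝ := 4*K1^2 + 3*(4*K0^2) + 3*(4*K2^2) + 3*(4*K2^2)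
      + 3*(16*(KL/ε)^2) + 3*(4*K3^2) + 3*(4*K3^2) with hCtot
  refine Integrable.mono' (g := fun s => (σ ^ (-(2*α)) * Ctot) * (s ^ a * Real.exp (-s))
      + (σ ^ (-(2*α)) * Ctot) * (s ^ b * Real.exp (-s))) ?_ ?_ ?_
  · exact ((integrable_majorant' ha1).const_mul _).add ((integrable_majorant' hb1).const_mul _)
  · refine ContinuousOn.aestronglyMeasurable ?_ measurableSet_Ioi
    have hc : ∀ p : ℝ, ContinuousOn (fun s : ℝ => s ^ p) (Ioi 0) := fun p s hs =>
      (Real.continuousAt_rpow_const s p (Or.inl (ne_of_gt hs))).continuousWithinAt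
    have hlogc : ContinuousOn Real.log (Ioi 0) := fun s hs =>
      (Real.continuousAt_log (ne_of_gt hs)).continuousWithinAt
    have hexpc : ContinuousOn (fun s : ℝ => Real.exp (-((1+2*α)*s))) (Ioi 0) :=
      (Real.continuous_exp.comp (by continuity)).continuousOn
    unfold Hfun
    exact ((continuousOn_const.mul (hc β)).mul hexpc).mul
      (((((continuousOn_const.mul (hc ξ)).mul (continuousOn_const.sub continuousOn_id)).pow 2).add
        ((continuousOn_const.mul (continuousOn_const.add (((continuousOn_const.sub (hc ξ)).mul
          (continuousOn_const.sub continuousOn_id)).div_const ξ))).pow 2)).add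
        ((((hlogc.neg.mul (continuousOn_const.sub continuousOn_id)).div_const ξ).sub
          (((continuousOn_const.sub (hc ξ)).mul (continuousOn_const.sub continuousOn_id)).div_const (ξ^2))).pow 2))
  · rw [ae_restrict_iff' measurableSet_Ioi]
    refine Filter.Eventually.of_forall (fun s => ?_)
    intro hs'
    have hs0 : 0 < s := hs'
    have hsβ := Real.rpow_pos_of_pos hs0 β
    have hsξ := Real.rpow_pos_of_pos hs0 ξ
    set W : ℝ := s ^ a + s ^ b with hWdef
    -- piece bounds
    have m1 : s ^ β * (σ⁻¹ * s ^ ξ * (ξ+1-s))^2 ≤ 4*K1^2*W :=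
      master' hs0 (by positivity) (piece_bound' hs0) haβξ hbβξ
    have hX0 : |(-σ⁻¹ : ℝ)| ≤ σ⁻¹ * s ^ (0:ℝ) * (1+s) := by
      rw [abs_neg, abs_of_pos (inv_pos.2 hσ), Real.rpow_zero]
      nlinarith [inv_pos.2 hσ]
    have m0 : s ^ β * (-σ⁻¹ : ℝ)^2 ≤ 4*K0^2*W :=
      master' hs0 (inv_pos.2 hσ).le hX0 haβ hbβ
    have m2a : s ^ β * (σ⁻¹/ξ * s ^ (0:ℝ) * (ξ+1-s))^2 ≤ 4*K2^2*W :=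
      master' hs0 (by positivity) (piece_bound' hs0) haβ hbβ
    have m2b : s ^ β * (σ⁻¹/ξ * s ^ ξ * (ξ+1-s))^2 ≤ 4*K2^2*W :=
      master' hs0 (by positivity) (piece_bound' hs0) haβξ hbβξ
    have m3a : s ^ β * (1/ξ^2 * s ^ (0:ℝ) * (ξ+1-s))^2 ≤ 4*K3^2*W :=
      master' hs0 (by positivity) (piece_bound' hs0) haβ hbβ
    have m3b : s ^ β * (1/ξ^2 * s ^ ξ * (ξ+1-s))^2 ≤ 4*K3^2*W :=
      master' hs0 (by positivity) (piece_bound' hs0) haβξ hbβξ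
    have hXL : |(-(Real.log s))*(1-s)/ξ| ≤ KL * |Real.log s| * (1+s) := by
      rw [abs_div, abs_mul, abs_neg]
      have h1s : |1 - s| ≤ 1 + s := abs_le.2 ⟨by linarith, by linarith⟩
      have habsξpos : 0 < |ξ| := abs_pos.2 hξ0
      calc |Real.log s| * |1-s| / |ξ| ≤ |Real.log s| * (1+s) / |ξ| := by gcongr
        _ = KL * |Real.log s| * (1+s) := by rw [hKL]; ring
    have mL : s ^ β * ((-(Real.log s))*(1-s)/ξ)^2 ≤ 16*(KL/ε)^2*W :=
      master_log' hs0 hεpos (by positivity) hXL haε hbε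
    -- decompositions
    have dS2 : (σ⁻¹ * (-1 + (1 - s ^ ξ)*(ξ+1-s)/ξ))^2 ≤
        3*((-σ⁻¹ : ℝ)^2 + (σ⁻¹/ξ * s ^ (0:ℝ) * (ξ+1-s))^2 + (σ⁻¹/ξ * s ^ ξ * (ξ+1-s))^2) := by
      have e : σ⁻¹ * (-1 + (1 - s ^ ξ)*(ξ+1-s)/ξ)
          = (-σ⁻¹) + (σ⁻¹/ξ * s ^ (0:ℝ) * (ξ+1-s)) + (-(σ⁻¹/ξ * s ^ ξ * (ξ+1-s))) := by
        rw [Real.rpow_zero]; field_simp; ring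
      rw [e]
      exact (three_sq' (-σ⁻¹) (σ⁻¹/ξ * s ^ (0:ℝ) * (ξ+1-s))
        (-(σ⁻¹/ξ * s ^ ξ * (ξ+1-s)))).trans (le_of_eq (by ring))
    have dS3 : (-(Real.log s)*(1-s)/ξ - (1 - s ^ ξ)*(ξ+1-s)/ξ^2)^2 ≤
        3*(((-(Real.log s))*(1-s)/ξ)^2 + (1/ξ^2 * s ^ (0:ℝ) * (ξ+1-s))^2
          + (1/ξ^2 * s ^ ξ * (ξ+1-s))^2) := by
      have e : -(Real.log s)*(1-s)/ξ - (1 - s ^ ξ)*(ξ+1-s)/ξ^2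
          = ((-(Real.log s))*(1-s)/ξ) + (-(1/ξ^2 * s ^ (0:ℝ) * (ξ+1-s)))
            + (1/ξ^2 * s ^ ξ * (ξ+1-s)) := by
        rw [Real.rpow_zero]; field_simp; ring
      rw [e]
      exact (three_sq' ((-(Real.log s))*(1-s)/ξ) (-(1/ξ^2 * s ^ (0:ℝ) * (ξ+1-s)))
        (1/ξ^2 * s ^ ξ * (ξ+1-s))).trans (le_of_eq (by ring))
    have q2 : s ^ β * (σ⁻¹ * (-1 + (1 - s ^ ξ)*(ξ+1-s)/ξ))^2 ≤
        3*(s ^ β * (-σ⁻¹ : ℝ)^2) + 3*(s ^ β * (σ⁻¹/ξ * s ^ (0:ℝ) * (ξ+1-s))^2)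
          + 3*(s ^ β * (σ⁻¹/ξ * s ^ ξ * (ξ+1-s))^2) :=
      (mul_le_mul_of_nonneg_left dS2 hsβ.le).trans (le_of_eq (by ring))
    have q3 : s ^ β * (-(Real.log s)*(1-s)/ξ - (1 - s ^ ξ)*(ξ+1-s)/ξ^2)^2 ≤
        3*(s ^ β * ((-(Real.log s))*(1-s)/ξ)^2) + 3*(s ^ β * (1/ξ^2 * s ^ (0:ℝ) * (ξ+1-s))^2)
          + 3*(s ^ β * (1/ξ^2 * s ^ ξ * (ξ+1-s))^2) :=
      (mul_le_mul_of_nonneg_left dS3 hsβ.le).trans (le_of_eq (by ring))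
    have hsum : s ^ β * ((σ⁻¹ * s ^ ξ * (ξ+1-s))^2 + (σ⁻¹ * (-1 + (1 - s ^ ξ)*(ξ+1-s)/ξ))^2 +
        (-(Real.log s)*(1-s)/ξ - (1 - s ^ ξ)*(ξ+1-s)/ξ^2)^2) ≤ Ctot * W := by
      calc s ^ β * ((σ⁻¹ * s ^ ξ * (ξ+1-s))^2 + (σ⁻¹ * (-1 + (1 - s ^ ξ)*(ξ+1-s)/ξ))^2 +
          (-(Real.log s)*(1-s)/ξ - (1 - s ^ ξ)*(ξ+1-s)/ξ^2)^2)
          = s ^ β * (σ⁻¹ * s ^ ξ * (ξ+1-s))^2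
            + s ^ β * (σ⁻¹ * (-1 + (1 - s ^ ξ)*(ξ+1-s)/ξ))^2
            + s ^ β * (-(Real.log s)*(1-s)/ξ - (1 - s ^ ξ)*(ξ+1-s)/ξ^2)^2 := by ring
        _ ≤ 4*K1^2*W + (3*(4*K0^2*W) + 3*(4*K2^2*W) + 3*(4*K2^2*W))
            + (3*(16*(KL/ε)^2*W) + 3*(4*K3^2*W) + 3*(4*K3^2*W)) := by
            refine add_le_add (add_le_add m1 (q2.trans ?_)) (q3.trans ?_)
            · exact add_le_add (add_le_add (by linarith only [m0]) (by linarith only [m2a]))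
                (by linarith only [m2b])
            · exact add_le_add (add_le_add (by linarith only [mL]) (by linarith only [m3a]))
                (by linarith only [m3b])
        _ = Ctot * W := by rw [hCtot]; ring
    -- final assembly
    have hSnn : (0:ℝ) ≤ (σ⁻¹ * s ^ ξ * (ξ+1-s))^2 + (σ⁻¹ * (-1 + (1 - s ^ ξ)*(ξ+1-s)/ξ))^2 +
        (-(Real.log s)*(1-s)/ξ - (1 - s ^ ξ)*(ξ+1-s)/ξ^2)^2 := by positivity
    have hσp := Real.rpow_pos_of_pos hσ (-(2*α))
    have hHnn : 0 ≤ Hfun σ ξ α β s := by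
      unfold Hfun
      exact mul_nonneg (mul_nonneg (mul_nonneg hσp.le hsβ.le) (Real.exp_pos _).le) hSnn
    rw [Real.norm_eq_abs, abs_of_nonneg hHnn]
    have hexple : Real.exp (-((1+2*α)*s)) ≤ Real.exp (-s) := by
      have h2as : 0 ≤ 2 * (α * s) := by positivity
      exact Real.exp_le_exp.2 (by linarith only [h2as])
    calc Hfun σ ξ α β s
        = (σ ^ (-(2*α)) * Real.exp (-((1+2*α)*s))) * (s ^ β *
          ((σ⁻¹ * s ^ ξ * (ξ+1-s))^2 + (σ⁻¹ * (-1 + (1 - s ^ ξ)*(ξ+1-s)/ξ))^2 +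
           (-(Real.log s)*(1-s)/ξ - (1 - s ^ ξ)*(ξ+1-s)/ξ^2)^2)) := by unfold Hfun; ring
      _ ≤ (σ ^ (-(2*α)) * Real.exp (-s)) * (Ctot * W) := by
          exact mul_le_mul (mul_le_mul_of_nonneg_left hexple hσp.le) hsum
            (mul_nonneg hsβ.le hSnn) (mul_nonneg hσp.le (Real.exp_pos _).le)
      _ = (σ ^ (-(2*α)) * Ctot) * (s ^ a * Real.exp (-s))
          + (σ ^ (-(2*α)) * Ctot) * (s ^ b * Real.exp (-s)) := by rw [hWdef]; ring

private noncomputable def gevPhi (μ σ ξ s : ℝ) : ℝ := μ + σ * (s ^ (-ξ) - 1) / ξ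

/-- For `ξ ≠ 0` with `ξ > -(2α+1)/(2α+2)`, the integral over the support `D` of
`(S_μ² + S_σ² + S_ξ²) f^{1+2α}` is finite. -/

theorem stmt_12 (α μ σ ξ : ℝ) (hα : 0 < α) (hσ : 0 < σ) (hξ0 : ξ ≠ 0)
    (hξ : ξ > -(2 * α + 1) / (2 * α + 2)) :
    IntegrableOn
      (fun x => (scoreMu μ σ ξ x ^ 2 + scoreSigma μ σ ξ x ^ 2 + scoreXi μ σ ξ x ^ 2) *
        gevDensity μ σ ξ x ^ (1 + 2 * α))
      {x : ℝ | 0 < gevT μ σ ξ x} := by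
  have h2α : (0:ℝ) < 2 * α + 2 := by linarith
  have hmul : -(2 * α + 1) < ξ * (2 * α + 2) := by
    have := (div_lt_iff₀ h2α).mp hξ
    linarith
  have hξ1 : (-1:ℝ) < ξ := by nlinarith [hmul]
  have hm1 : -1 < 2 * α * (ξ + 1) + 2 * min ξ 0 := by
    rcases le_or_gt ξ 0 with h | h
    · rw [min_eq_left h]; nlinarith [hmul]
    · rw [min_eq_right h.le]
      nlinarith [mul_pos hα (show (0:ℝ) < ξ + 1 by linarith)]
  -- change of variables
  have himg : gevPhi μ σ ξ '' (Ioi 0) = {x : ℝ | 0 < gevT μ σ ξ x} := by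
    ext x
    simp only [Set.mem_image, Set.mem_Ioi, Set.mem_setOf_eq]
    constructor
    · rintro ⟨s, hs, rfl⟩
      have h : gevT μ σ ξ (gevPhi μ σ ξ s) = s ^ (-ξ) := by
        unfold gevT gevPhi; field_simp; ring
      rw [h]; exact Real.rpow_pos_of_pos hs _
    · intro hx
      refine ⟨(gevT μ σ ξ x) ^ (-1/ξ), Real.rpow_pos_of_pos hx _, ?_⟩
      have h1 : ((gevT μ σ ξ x) ^ (-1/ξ)) ^ (-ξ) = gevT μ σ ξ x := by
        rw [← Real.rpow_mul hx.le, show (-1/ξ) * (-ξ) = 1 by field_simp, Real.rpow_one]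
      unfold gevPhi
      rw [h1]
      unfold gevT
      field_simp
      ring
  have hderiv : ∀ s ∈ Ioi (0:ℝ), HasDerivWithinAt (gevPhi μ σ ξ) (-σ * s ^ (-ξ-1)) (Ioi 0) s := by
    intro s hs
    simp only [Set.mem_Ioi] at hs
    have h1 : HasDerivAt (fun u : ℝ => u ^ (-ξ)) (-ξ * s ^ (-ξ-1)) s :=
      Real.hasDerivAt_rpow_const (Or.inl hs.ne')
    have h2 : HasDerivAt (gevPhi μ σ ξ) (σ * (-ξ * s ^ (-ξ-1)) / ξ) s := by
      unfold gevPhi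
      exact (((h1.sub_const 1).const_mul σ).div_const ξ).const_add μ
    have h3 : σ * (-ξ * s ^ (-ξ-1)) / ξ = -σ * s ^ (-ξ-1) := by field_simp
    rw [h3] at h2
    exact h2.hasDerivWithinAt
  have hinj : Set.InjOn (gevPhi μ σ ξ) (Ioi 0) := by
    intro s1 h1 s2 h2 h
    simp only [Set.mem_Ioi] at h1 h2
    have e : s1 ^ (-ξ) = s2 ^ (-ξ) := by
      unfold gevPhi at h
      field_simp at h
      have h' := mul_left_cancel₀ hσ.ne' (add_left_cancel h)
      linarith
    have e2 : (s1 ^ (-ξ)) ^ (-ξ)⁻¹ = (s2 ^ (-ξ)) ^ (-ξ)⁻¹ := by rw [e]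
    rwa [← Real.rpow_mul h1.le, ← Real.rpow_mul h2.le,
      mul_inv_cancel₀ (neg_ne_zero.mpr hξ0), Real.rpow_one, Real.rpow_one] at e2
  rw [← himg, integrableOn_image_iff_integrableOn_abs_deriv_smul measurableSet_Ioi hderiv hinj]
  refine (Hfun_integrable hσ hξ0 hα hξ1 rfl hm1).congr_fun (fun s hs => ?_) measurableSet_Ioi
  simp only [Set.mem_Ioi] at hs
  have hP : 0 < s ^ ξ := Real.rpow_pos_of_pos hs ξ
  have hsneg : s ^ (-ξ) = (s ^ ξ)⁻¹ := Real.rpow_neg hs.le ξ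
  have ht : gevT μ σ ξ (gevPhi μ σ ξ s) = (s ^ ξ)⁻¹ := by
    unfold gevT gevPhi
    rw [hsneg]
    field_simp
    ring
  have h1 : ((s ^ ξ)⁻¹ : ℝ) ^ (-1 / ξ) = s := by
    rw [← hsneg, ← Real.rpow_mul hs.le, show (-ξ) * (-1/ξ) = 1 by field_simp, Real.rpow_one]
  have h2 : ((s ^ ξ)⁻¹ : ℝ) ^ (-(ξ + 1) / ξ) = s ^ (ξ + 1) := by
    rw [← hsneg, ← Real.rpow_mul hs.le, show (-ξ) * (-(ξ+1)/ξ) = ξ + 1 by field_simp]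
  have hlog : Real.log ((s ^ ξ)⁻¹) = -(ξ * Real.log s) := by
    rw [Real.log_inv, Real.log_rpow hs]
  have hdens : gevDensity μ σ ξ (gevPhi μ σ ξ s) = σ⁻¹ * s ^ (ξ+1) * Real.exp (-s) := by
    unfold gevDensity
    rw [ht, if_pos (inv_pos.2 hP), h1, h2]
  have hmu : scoreMu μ σ ξ (gevPhi μ σ ξ s) = σ⁻¹ * s ^ ξ * (ξ+1-s) := by
    unfold scoreMu
    rw [ht, h1, mul_inv, inv_inv]
  have hsig : scoreSigma μ σ ξ (gevPhi μ σ ξ s) = σ⁻¹ * (-1 + (1 - s ^ ξ)*(ξ+1-s)/ξ) := by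
    unfold scoreSigma
    rw [ht, h1]
    unfold gevPhi
    rw [hsneg]
    field_simp
    ring
  have hxi : scoreXi μ σ ξ (gevPhi μ σ ξ s) =
      -(Real.log s)*(1-s)/ξ - (1 - s ^ ξ)*(ξ+1-s)/ξ^2 := by
    unfold scoreXi
    rw [ht, h1, hlog]
    unfold gevPhi
    rw [hsneg]
    field_simp
    ring
  simp only [smul_eq_mul]
  rw [hdens, hmu, hsig, hxi]
  have hp := Real.rpow_pos_of_pos hs (-ξ-1)
  have habs : |(-σ * s ^ (-ξ-1))| = σ * s ^ (-ξ-1) := by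
    rw [abs_of_neg (by nlinarith)]; ring
  rw [habs]
  have hpow : (σ⁻¹ * s ^ (ξ+1) * Real.exp (-s)) ^ (1+2*α)
      = σ ^ (-(1+2*α)) * s ^ ((ξ+1)*(1+2*α)) * Real.exp (-((1+2*α)*s)) := by
    rw [Real.mul_rpow (by positivity) (Real.exp_pos _).le,
        Real.mul_rpow (by positivity) (by positivity),
        Real.inv_rpow hσ.le, ← Real.rpow_neg hσ.le,
        ← Real.rpow_mul hs.le, ← Real.exp_mul,
        show -s * (1+2*α) = -((1+2*α)*s) by ring]
  rw [hpow]
  have e1 : σ ^ (-(2*α)) = σ * σ ^ (-(1+2*α)) := by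
    rw [show σ * σ ^ (-(1+2*α)) = σ ^ (1:ℝ) * σ ^ (-(1+2*α)) by rw [Real.rpow_one],
        ← Real.rpow_add hσ]
    ring_nf
  have e2 : s ^ (2*α*(ξ+1)) = s ^ (-ξ-1) * s ^ ((ξ+1)*(1+2*α)) := by
    rw [← Real.rpow_add hs]
    ring_nf
  unfold Hfun
  rw [e1, e2]
  ring
end

section
/- Let α > 0, μ ∈ ℝ, σ > 0 and ξ ≠ 0 with ξ > −(1+α)/(2+α). Then the integral over the support D of (S_μ(x)² + S_σ(x)² + S_ξ(x)²) · f(x; μ,σ,ξ)^{1+α} is finite; in particular every entry of the matrix J_α = ∫_D S(x) S(x)ᵀ f(x; μ,σ,ξ)^{1+α} dx, where S = (S_μ, S_σ, S_ξ)ᵀ, is finite. -/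
open MeasureTheory Real

open Set

lemma log_sq_le {u : ℝ} (hu : 0 < u) : Real.log u ^ 2 ≤ 4 * u⁻¹ + u ^ 2 := by
  rcases le_or_gt 1 u with h | h
  · have h0 : 0 ≤ Real.log u := Real.log_nonneg h
    have h1 : Real.log u ≤ u - 1 := Real.log_le_sub_one_of_pos hu
    have h2 : (0:ℝ) ≤ 4 * u⁻¹ := by positivity
    nlinarith
  · have hspos : 0 < u ^ ((-1:ℝ)/2) := rpow_pos_of_pos hu _
    have hlog : Real.log (u ^ ((-1:ℝ)/2)) = (-1/2) * Real.log u := Real.log_rpow hu _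
    have h1 : Real.log (u ^ ((-1:ℝ)/2)) ≤ u ^ ((-1:ℝ)/2) - 1 :=
      Real.log_le_sub_one_of_pos hspos
    have h0 : 0 ≤ Real.log (u ^ ((-1:ℝ)/2)) := by
      apply Real.log_nonneg
      exact Real.one_le_rpow_of_pos_of_le_one_of_nonpos hu h.le (by norm_num)
    have hsq : (u ^ ((-1:ℝ)/2)) ^ 2 = u⁻¹ := by
      rw [← Real.rpow_natCast (u ^ ((-1:ℝ)/2)) 2, ← Real.rpow_mul hu.le]
      norm_num [Real.rpow_neg_one]
    have hls : Real.log (u ^ ((-1:ℝ)/2)) ^ 2 ≤ (u ^ ((-1:ℝ)/2)) ^ 2 := by nlinarith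
    have he : Real.log u ^ 2 = 4 * Real.log (u ^ ((-1:ℝ)/2)) ^ 2 := by rw [hlog]; ring
    nlinarith [sq_nonneg u]

set_option maxHeartbeats 1000000 in
lemma core_bound (a q B u v L w : ℝ) (ha : 0 < a) (hB0 : 0 ≤ B) (hu : 0 < u) (hv : 0 < v)
    (hL : L ^ 2 ≤ 4 * u⁻¹ + u ^ 2) (hw2 : w ^ 2 ≤ 2 * B + 2 * u ^ 2) :
    (a * v * w) ^ 2 + (-a + (1 - v) * w * (q * a)) ^ 2 +
      (-(L * (1 - u)) * q - (1 - v) * w * q ^ 2) ^ 2 ≤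
    (100 * (a ^ 2 + q ^ 2 + q ^ 4 + a ^ 2 * q ^ 2) * (B + 1)) *
      (u⁻¹ + 1 + u + u ^ 2 + u ^ 3 + u ^ 4 + v ^ 2 + u ^ 2 * v ^ 2) := by
  have ha2 : (0:ℝ) ≤ a ^ 2 := sq_nonneg _
  have hq2 : (0:ℝ) ≤ q ^ 2 := sq_nonneg _
  have hq4 : (0:ℝ) ≤ q ^ 4 := by positivity
  have hu0 : (0:ℝ) ≤ u⁻¹ := by positivity
  have h1v : (1 - v) ^ 2 ≤ 2 + 2 * v ^ 2 := by nlinarith [sq_nonneg (1 + v)]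
  have h1u : (1 - u) ^ 2 ≤ 2 + 2 * u ^ 2 := by nlinarith [sq_nonneg (1 + u)]
  have hvw : (1 - v) ^ 2 * w ^ 2 ≤ (2 + 2 * v ^ 2) * (2 * B + 2 * u ^ 2) :=
    mul_le_mul h1v hw2 (sq_nonneg _) (by positivity)
  have hLu : L ^ 2 * (1 - u) ^ 2 ≤ (4 * u⁻¹ + u ^ 2) * (2 + 2 * u ^ 2) :=
    mul_le_mul hL h1u (sq_nonneg _) (by positivity)
  have hA : (a * v * w) ^ 2 ≤ a ^ 2 * (2 * B + 2 * u ^ 2) * v ^ 2 := by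
    calc (a * v * w) ^ 2 = a ^ 2 * v ^ 2 * w ^ 2 := by ring
      _ ≤ a ^ 2 * v ^ 2 * (2 * B + 2 * u ^ 2) :=
          mul_le_mul_of_nonneg_left hw2 (by positivity)
      _ = a ^ 2 * (2 * B + 2 * u ^ 2) * v ^ 2 := by ring
  have sq2 : ∀ x y : ℝ, (x + y) ^ 2 ≤ 2 * x ^ 2 + 2 * y ^ 2 := by
    intro x y; nlinarith [sq_nonneg (x - y)]
  have hB' : (-a + (1 - v) * w * (q * a)) ^ 2
      ≤ 2 * a ^ 2 + 2 * q ^ 2 * a ^ 2 * ((1 - v) ^ 2 * w ^ 2) := by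
    have h := sq2 (-a) ((1 - v) * w * (q * a))
    have e : 2 * (-a) ^ 2 + 2 * ((1 - v) * w * (q * a)) ^ 2
        = 2 * a ^ 2 + 2 * q ^ 2 * a ^ 2 * ((1 - v) ^ 2 * w ^ 2) := by ring
    linarith
  have hC' : (-(L * (1 - u)) * q - (1 - v) * w * q ^ 2) ^ 2
      ≤ 2 * q ^ 2 * (L ^ 2 * (1 - u) ^ 2) + 2 * q ^ 4 * ((1 - v) ^ 2 * w ^ 2) := by
    have h := sq2 (-(L * (1 - u)) * q) (-((1 - v) * w * q ^ 2))
    have e : 2 * (-(L * (1 - u)) * q) ^ 2 + 2 * (-((1 - v) * w * q ^ 2)) ^ 2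
        = 2 * q ^ 2 * (L ^ 2 * (1 - u) ^ 2) + 2 * q ^ 4 * ((1 - v) ^ 2 * w ^ 2) := by ring
    have e2 : -(L * (1 - u)) * q - (1 - v) * w * q ^ 2
        = -(L * (1 - u)) * q + -((1 - v) * w * q ^ 2) := by ring
    rw [e2]; linarith
  have hq2vw : 2 * q ^ 2 * a ^ 2 * ((1 - v) ^ 2 * w ^ 2)
      ≤ 2 * q ^ 2 * a ^ 2 * ((2 + 2 * v ^ 2) * (2 * B + 2 * u ^ 2)) :=
    mul_le_mul_of_nonneg_left hvw (by positivity)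
  have hq4vw : 2 * q ^ 4 * ((1 - v) ^ 2 * w ^ 2)
      ≤ 2 * q ^ 4 * ((2 + 2 * v ^ 2) * (2 * B + 2 * u ^ 2)) :=
    mul_le_mul_of_nonneg_left hvw (by positivity)
  have hq2Lu : 2 * q ^ 2 * (L ^ 2 * (1 - u) ^ 2)
      ≤ 2 * q ^ 2 * ((4 * u⁻¹ + u ^ 2) * (2 + 2 * u ^ 2)) :=
    mul_le_mul_of_nonneg_left hLu (by positivity)
  have hexp : 2 * q ^ 2 * ((4 * u⁻¹ + u ^ 2) * (2 + 2 * u ^ 2))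
      = 16 * q ^ 2 * u⁻¹ + 16 * q ^ 2 * u + 4 * q ^ 2 * u ^ 2 + 4 * q ^ 2 * u ^ 4 := by
    have h : u⁻¹ * u ^ 2 = u := by
      rw [sq, ← mul_assoc, inv_mul_cancel₀ hu.ne', one_mul]
    linear_combination (16 * q ^ 2) * h
  set K : ℝ := 100 * (a ^ 2 + q ^ 2 + q ^ 4 + a ^ 2 * q ^ 2) * (B + 1) with hKdef
  have m1 : (0:ℝ) ≤ a ^ 2 * B := by positivity
  have m2 : (0:ℝ) ≤ q ^ 2 * B := by positivity
  have m3 : (0:ℝ) ≤ q ^ 4 * B := by positivity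
  have m4 : (0:ℝ) ≤ a ^ 2 * q ^ 2 := by positivity
  have m5 : (0:ℝ) ≤ a ^ 2 * q ^ 2 * B := by positivity
  have hK0 : (0:ℝ) ≤ K := by rw [hKdef]; positivity
  have c1 : 16 * q ^ 2 ≤ K := by rw [hKdef]; linarith [m1, m2, m3, m4, m5, ha2, hq2, hq4]
  have c2 : 2 * a ^ 2 + 8 * q ^ 2 * a ^ 2 * B + 8 * q ^ 4 * B ≤ K := by rw [hKdef]; linarith [m1, m2, m3, m4, m5, ha2, hq2, hq4]
  have c4 : 8 * q ^ 2 * a ^ 2 + 4 * q ^ 2 + 8 * q ^ 4 ≤ K := by rw [hKdef]; linarith [m1, m2, m3, m4, m5, ha2, hq2, hq4]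
  have c6 : 4 * q ^ 2 ≤ K := by rw [hKdef]; linarith [m1, m2, m3, m4, m5, ha2, hq2, hq4]
  have c7 : 2 * a ^ 2 * B + 8 * q ^ 2 * a ^ 2 * B + 8 * q ^ 4 * B ≤ K := by
    rw [hKdef]; linarith [m1, m2, m3, m4, m5, ha2, hq2, hq4]
  have c8 : 2 * a ^ 2 + 8 * q ^ 2 * a ^ 2 + 8 * q ^ 4 ≤ K := by rw [hKdef]; linarith [m1, m2, m3, m4, m5, ha2, hq2, hq4]
  have p1 : 0 ≤ (K - 16 * q ^ 2) * u⁻¹ := mul_nonneg (by linarith) hu0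
  have p3 : 0 ≤ (K - 16 * q ^ 2) * u := mul_nonneg (by linarith) hu.le
  have p4 : 0 ≤ (K - (8 * q ^ 2 * a ^ 2 + 4 * q ^ 2 + 8 * q ^ 4)) * u ^ 2 :=
    mul_nonneg (by linarith) (sq_nonneg _)
  have p5 : 0 ≤ K * u ^ 3 := mul_nonneg hK0 (by positivity)
  have p6 : 0 ≤ (K - 4 * q ^ 2) * u ^ 4 := mul_nonneg (by linarith) (by positivity)
  have p7 : 0 ≤ (K - (2 * a ^ 2 * B + 8 * q ^ 2 * a ^ 2 * B + 8 * q ^ 4 * B)) * v ^ 2 :=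
    mul_nonneg (by linarith) (sq_nonneg _)
  have p8 : 0 ≤ (K - (2 * a ^ 2 + 8 * q ^ 2 * a ^ 2 + 8 * q ^ 4)) * (u ^ 2 * v ^ 2) :=
    mul_nonneg (by linarith) (by positivity)
  linarith [hA, hB', hC', hq2vw, hq4vw, hq2Lu, hexp.le, hexp.ge,
    p1, p3, p4, p5, p6, p7, p8, c2]

noncomputable def gphi (μ σ ξ u : ℝ) : ℝ := μ + σ * (u ^ (-ξ) - 1) / ξ

section
variable {μ σ ξ : ℝ} {u : ℝ}

lemma gevT_gphi (hσ : 0 < σ) (hξ0 : ξ ≠ 0) : gevT μ σ ξ (gphi μ σ ξ u) = u ^ (-ξ) := by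
  unfold gevT gphi; field_simp; ring

lemma pow_aux1 (hξ0 : ξ ≠ 0) (hu : 0 < u) : (u ^ (-ξ) : ℝ) ^ (-1 / ξ) = u := by
  rw [← Real.rpow_mul hu.le, show -ξ * (-1 / ξ) = 1 by field_simp, Real.rpow_one]

lemma pow_aux2 (hξ0 : ξ ≠ 0) (hu : 0 < u) :
    (u ^ (-ξ) : ℝ) ^ (-(ξ + 1) / ξ) = u ^ (ξ + 1) := by
  rw [← Real.rpow_mul hu.le, show -ξ * (-(ξ + 1) / ξ) = ξ + 1 by field_simp]

lemma density_gphi (hσ : 0 < σ) (hξ0 : ξ ≠ 0) (hu : 0 < u) : gevDensity μ σ ξ (gphi μ σ ξ u)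
    = σ⁻¹ * u ^ (ξ + 1) * Real.exp (-u) := by
  unfold gevDensity
  rw [gevT_gphi hσ hξ0, if_pos (rpow_pos_of_pos hu (-ξ)), pow_aux1 hξ0 hu, pow_aux2 hξ0 hu]

lemma scoreMu_gphi (hσ : 0 < σ) (hξ0 : ξ ≠ 0) (hu : 0 < u) : scoreMu μ σ ξ (gphi μ σ ξ u) = σ⁻¹ * u ^ ξ * (ξ + 1 - u) := by
  unfold scoreMu
  rw [gevT_gphi hσ hξ0, pow_aux1 hξ0 hu, Real.rpow_neg hu.le]
  have h : (0:ℝ) < u ^ ξ := rpow_pos_of_pos hu ξ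
  field_simp

lemma scoreSigma_gphi (hσ : 0 < σ) (hξ0 : ξ ≠ 0) (hu : 0 < u) : scoreSigma μ σ ξ (gphi μ σ ξ u)
    = -σ⁻¹ + (1 - u ^ ξ) * (ξ + 1 - u) / (ξ * σ) := by
  unfold scoreSigma
  rw [gevT_gphi hσ hξ0, pow_aux1 hξ0 hu, Real.rpow_neg hu.le]
  unfold gphi
  rw [Real.rpow_neg hu.le]
  have h : (0:ℝ) < u ^ ξ := rpow_pos_of_pos hu ξ
  field_simp
  ring

lemma scoreXi_gphi (hσ : 0 < σ) (hξ0 : ξ ≠ 0) (hu : 0 < u) : scoreXi μ σ ξ (gphi μ σ ξ u)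
    = -(Real.log u * (1 - u)) / ξ - (1 - u ^ ξ) * (ξ + 1 - u) / ξ ^ 2 := by
  unfold scoreXi
  rw [gevT_gphi hσ hξ0, pow_aux1 hξ0 hu, Real.log_rpow hu]
  unfold gphi
  rw [Real.rpow_neg hu.le]
  have h : (0:ℝ) < u ^ ξ := rpow_pos_of_pos hu ξ
  field_simp
  ring

lemma gphi_image (hσ : 0 < σ) (hξ0 : ξ ≠ 0) :
    gphi μ σ ξ '' Ioi 0 = {x | 0 < gevT μ σ ξ x} := by
  ext x
  constructor
  · rintro ⟨u, hu, rfl⟩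
    have := gevT_gphi (μ := μ) (u := u) hσ hξ0
    simp only [mem_setOf_eq, this]
    exact rpow_pos_of_pos hu _
  · intro hx
    have hx' : 0 < gevT μ σ ξ x := hx
    refine ⟨gevT μ σ ξ x ^ (-1 / ξ), rpow_pos_of_pos hx' _, ?_⟩
    have ht : (gevT μ σ ξ x ^ (-1 / ξ)) ^ (-ξ) = gevT μ σ ξ x := by
      rw [← Real.rpow_mul hx'.le, show -1 / ξ * -ξ = 1 by field_simp, Real.rpow_one]
    unfold gphi
    rw [ht]
    unfold gevT
    field_simp
    ring

lemma gphi_inj (hσ : 0 < σ) (hξ0 : ξ ≠ 0) : InjOn (gphi μ σ ξ) (Ioi 0) := by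
  intro x hx y hy h
  have hx' : (0:ℝ) < x := hx
  have hy' : (0:ℝ) < y := hy
  have h2 : x ^ (-ξ) = y ^ (-ξ) := by
    unfold gphi at h
    have h3 : σ * (x ^ (-ξ) - 1) / ξ = σ * (y ^ (-ξ) - 1) / ξ := by linarith
    field_simp at h3
    linarith
  have h4 : (x ^ (-ξ)) ^ (-1 / ξ) = (y ^ (-ξ)) ^ (-1 / ξ) := by rw [h2]
  rwa [pow_aux1 hξ0 hx', pow_aux1 hξ0 hy'] at h4

end

lemma gphi_deriv {μ σ ξ : ℝ} (hσ : 0 < σ) (hξ0 : ξ ≠ 0) {u : ℝ} (hu : 0 < u) :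
    HasDerivWithinAt (gphi μ σ ξ) (-(σ * u ^ (-ξ - 1))) (Ioi 0) u := by
  have h1 : HasDerivAt (fun x : ℝ => x ^ (-ξ)) (-ξ * u ^ (-ξ - 1)) u :=
    Real.hasDerivAt_rpow_const (Or.inl hu.ne')
  have h2 : HasDerivAt (gphi μ σ ξ) (σ * (-ξ * u ^ (-ξ - 1)) / ξ) u := by
    unfold gphi
    exact (((h1.sub_const 1).const_mul σ).div_const ξ).const_add μ
  have h3 : σ * (-ξ * u ^ (-ξ - 1)) / ξ = -(σ * u ^ (-ξ - 1)) := by field_simp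
  rw [h3] at h2
  exact h2.hasDerivWithinAt

lemma meas_T (μ σ ξ : ℝ) : Measurable (gevT μ σ ξ) := by unfold gevT; fun_prop

lemma meas_scoreMu (μ σ ξ : ℝ) : Measurable (scoreMu μ σ ξ) := by
  unfold scoreMu gevT; fun_prop

lemma meas_scoreSigma (μ σ ξ : ℝ) : Measurable (scoreSigma μ σ ξ) := by
  unfold scoreSigma gevT; fun_prop

lemma meas_scoreXi (μ σ ξ : ℝ) : Measurable (scoreXi μ σ ξ) := by
  have hT : Measurable (gevT μ σ ξ) := meas_T μ σ ξ
  have hlog : Measurable fun x => Real.log (gevT μ σ ξ x) := Real.measurable_log.comp hT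
  unfold scoreXi
  fun_prop

lemma meas_density (μ σ ξ : ℝ) : Measurable (gevDensity μ σ ξ) := by
  have hT : Measurable (gevT μ σ ξ) := meas_T μ σ ξ
  unfold gevDensity
  apply Measurable.ite (measurableSet_lt measurable_const hT) ?_ measurable_const
  fun_prop

set_option maxHeartbeats 1000000 in
lemma key (α μ σ ξ : ℝ) (hα : 0 < α) (hσ : 0 < σ) (hξ0 : ξ ≠ 0)
    (hξ : ξ > -(1 + α) / (2 + α)) :
    IntegrableOn
      (fun x => (scoreMu μ σ ξ x ^ 2 + scoreSigma μ σ ξ x ^ 2 + scoreXi μ σ ξ x ^ 2) *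
        gevDensity μ σ ξ x ^ (1 + α))
      {x : ℝ | 0 < gevT μ σ ξ x} := by
  have h2α : (0:ℝ) < 2 + α := by linarith
  have hξ' : -(1 + α) < ξ * (2 + α) := by
    rw [gt_iff_lt, div_lt_iff₀ h2α] at hξ
    linarith
  have hξ1 : -1 < ξ := by nlinarith
  have hβ : 0 < (ξ + 1) * α := by nlinarith
  have hβ2 : -1 < (ξ + 1) * α + 2 * ξ := by nlinarith
  rw [← gphi_image hσ hξ0,
    integrableOn_image_iff_integrableOn_abs_deriv_smul measurableSet_Ioi
      (fun u hu => gphi_deriv hσ hξ0 (mem_Ioi.mp hu)) (gphi_inj hσ hξ0)]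
  simp only [smul_eq_mul]
  -- the dominating function
  set C : ℝ := σ * σ⁻¹ ^ (1 + α) *
      (100 * (σ⁻¹ ^ 2 + ξ⁻¹ ^ 2 + ξ⁻¹ ^ 4 + σ⁻¹ ^ 2 * ξ⁻¹ ^ 2) * ((ξ + 1) ^ 2 + 1)) with hC
  have hC0 : 0 ≤ C := by rw [hC]; positivity
  have hGam : ∀ s : ℝ, -1 < s →
      IntegrableOn (fun u : ℝ => u ^ s * Real.exp (-(1 + α) * u)) (Ioi 0) := by
    intro s hs
    have h := integrableOn_rpow_mul_exp_neg_mul_rpow hs (show (0:ℝ) < 1 by norm_num)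
      (show (0:ℝ) < 1 + α by linarith)
    simpa [Real.rpow_one] using h
  set β : ℝ := (ξ + 1) * α with hβdef
  have hF : IntegrableOn (fun u : ℝ =>
      C * (u ^ (β - 1) * Real.exp (-(1 + α) * u)) +
      C * (u ^ β * Real.exp (-(1 + α) * u)) +
      C * (u ^ (β + 1) * Real.exp (-(1 + α) * u)) +
      C * (u ^ (β + 2) * Real.exp (-(1 + α) * u)) +
      C * (u ^ (β + 3) * Real.exp (-(1 + α) * u)) +
      C * (u ^ (β + 4) * Real.exp (-(1 + α) * u)) +
      C * (u ^ (β + 2 * ξ) * Real.exp (-(1 + α) * u)) +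
      C * (u ^ (β + 2 * ξ + 2) * Real.exp (-(1 + α) * u))) (Ioi 0) := by
    refine ((((((((hGam _ (by linarith)).const_mul C).add
      ((hGam _ (by linarith)).const_mul C)).add
      ((hGam _ (by linarith)).const_mul C)).add
      ((hGam _ (by linarith)).const_mul C)).add
      ((hGam _ (by linarith)).const_mul C)).add
      ((hGam _ (by linarith)).const_mul C)).add
      ((hGam _ (by linarith)).const_mul C)).add
      ((hGam _ (by linarith)).const_mul C)
  apply Integrable.mono' hF
  · apply Measurable.aestronglyMeasurable
    have hgD : Measurable (gevDensity μ σ ξ) := meas_density μ σ ξ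
    have h1 : Measurable (scoreMu μ σ ξ) := meas_scoreMu μ σ ξ
    have h2 : Measurable (scoreSigma μ σ ξ) := meas_scoreSigma μ σ ξ
    have h3 : Measurable (scoreXi μ σ ξ) := meas_scoreXi μ σ ξ
    have hphi : Measurable (gphi μ σ ξ) := by unfold gphi; fun_prop
    fun_prop
  · rw [ae_restrict_iff' measurableSet_Ioi]
    refine Filter.Eventually.of_forall fun u hu => ?_
    have hu : (0:ℝ) < u := hu
    have habs : |(-(σ * u ^ (-ξ - 1)))| = σ * u ^ (-ξ - 1) := by
      rw [abs_neg, abs_of_pos (by positivity)]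
    rw [Real.norm_eq_abs, scoreMu_gphi hσ hξ0 hu, scoreSigma_gphi hσ hξ0 hu,
      scoreXi_gphi hσ hξ0 hu, density_gphi hσ hξ0 hu, habs,
      abs_of_nonneg (by positivity)]
    have hDpow : (σ⁻¹ * u ^ (ξ + 1) * Real.exp (-u)) ^ (1 + α)
        = σ⁻¹ ^ (1 + α) * u ^ ((ξ + 1) * (1 + α)) * Real.exp (-(1 + α) * u) := by
      rw [Real.mul_rpow (by positivity) (Real.exp_pos _).le,
        Real.mul_rpow (by positivity) (by positivity),
        ← Real.rpow_mul hu.le, ← Real.exp_mul]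
      ring_nf
    rw [hDpow]
    have hpow : u ^ (-ξ - 1) * u ^ ((ξ + 1) * (1 + α)) = u ^ β := by
      rw [← Real.rpow_add hu, show -ξ - 1 + (ξ + 1) * (1 + α) = β by rw [hβdef]; ring]
    have hnat2 : (u:ℝ) ^ ((2:ℝ)) = u ^ (2:ℕ) := by
      rw [show ((2:ℝ)) = ((2:ℕ):ℝ) by norm_num, Real.rpow_natCast]
    have hnat3 : (u:ℝ) ^ ((3:ℝ)) = u ^ (3:ℕ) := by
      rw [show ((3:ℝ)) = ((3:ℕ):ℝ) by norm_num, Real.rpow_natCast]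
    have hnat4 : (u:ℝ) ^ ((4:ℝ)) = u ^ (4:ℕ) := by
      rw [show ((4:ℝ)) = ((4:ℕ):ℝ) by norm_num, Real.rpow_natCast]
    have e1 : u ^ (β - 1) = u ^ β * u⁻¹ := by
      rw [show β - 1 = β + (-1) by ring, Real.rpow_add hu, Real.rpow_neg_one]
    have e2 : u ^ (β + 1) = u ^ β * u := by rw [Real.rpow_add hu, Real.rpow_one]
    have e3 : u ^ (β + 2) = u ^ β * u ^ (2:ℕ) := by rw [Real.rpow_add hu, hnat2]
    have e4 : u ^ (β + 3) = u ^ β * u ^ (3:ℕ) := by rw [Real.rpow_add hu, hnat3]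
    have e5 : u ^ (β + 4) = u ^ β * u ^ (4:ℕ) := by rw [Real.rpow_add hu, hnat4]
    have e2xi : u ^ ((2:ℝ) * ξ) = (u ^ ξ) ^ (2:ℕ) := by
      rw [show (2:ℝ) * ξ = ξ * 2 by ring, Real.rpow_mul hu.le,
        show ((2:ℝ)) = ((2:ℕ):ℝ) by norm_num, Real.rpow_natCast]
    have e6 : u ^ (β + 2 * ξ) = u ^ β * (u ^ ξ) ^ (2:ℕ) := by
      rw [Real.rpow_add hu, e2xi]
    have e7 : u ^ (β + 2 * ξ + 2) = u ^ β * ((u ^ ξ) ^ (2:ℕ) * u ^ (2:ℕ)) := by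
      rw [show β + 2 * ξ + 2 = β + 2 * ξ + (2:ℝ) by ring, Real.rpow_add hu,
        Real.rpow_add hu, e2xi, hnat2, mul_assoc]
    -- core inequality
    have hv : (0:ℝ) < u ^ ξ := rpow_pos_of_pos hu ξ
    have hcore := core_bound σ⁻¹ ξ⁻¹ ((ξ + 1) ^ 2) u (u ^ ξ) (Real.log u) (ξ + 1 - u)
      (by positivity) (sq_nonneg _) hu hv (log_sq_le hu)
      (by nlinarith [sq_nonneg (ξ + 1 + u)])
    have hGeq : (σ⁻¹ * u ^ ξ * (ξ + 1 - u)) ^ 2 +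
        (-σ⁻¹ + (1 - u ^ ξ) * (ξ + 1 - u) / (ξ * σ)) ^ 2 +
        (-(Real.log u * (1 - u)) / ξ - (1 - u ^ ξ) * (ξ + 1 - u) / ξ ^ 2) ^ 2
        = (σ⁻¹ * (u ^ ξ) * (ξ + 1 - u)) ^ 2 +
          (-σ⁻¹ + (1 - u ^ ξ) * (ξ + 1 - u) * (ξ⁻¹ * σ⁻¹)) ^ 2 +
          (-(Real.log u * (1 - u)) * ξ⁻¹ - (1 - u ^ ξ) * (ξ + 1 - u) * ξ⁻¹ ^ 2) ^ 2 := by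
      field_simp
    calc σ * u ^ (-ξ - 1) *
          (((σ⁻¹ * u ^ ξ * (ξ + 1 - u)) ^ 2 +
            (-σ⁻¹ + (1 - u ^ ξ) * (ξ + 1 - u) / (ξ * σ)) ^ 2 +
            (-(Real.log u * (1 - u)) / ξ - (1 - u ^ ξ) * (ξ + 1 - u) / ξ ^ 2) ^ 2) *
           (σ⁻¹ ^ (1 + α) * u ^ ((ξ + 1) * (1 + α)) * Real.exp (-(1 + α) * u)))
        = σ * σ⁻¹ ^ (1 + α) * ((u ^ (-ξ - 1) * u ^ ((ξ + 1) * (1 + α))) *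
            Real.exp (-(1 + α) * u) *
            ((σ⁻¹ * u ^ ξ * (ξ + 1 - u)) ^ 2 +
             (-σ⁻¹ + (1 - u ^ ξ) * (ξ + 1 - u) / (ξ * σ)) ^ 2 +
             (-(Real.log u * (1 - u)) / ξ - (1 - u ^ ξ) * (ξ + 1 - u) / ξ ^ 2) ^ 2)) := by
          ring
      _ ≤ σ * σ⁻¹ ^ (1 + α) * (u ^ β * Real.exp (-(1 + α) * u) *
            ((100 * (σ⁻¹ ^ 2 + ξ⁻¹ ^ 2 + ξ⁻¹ ^ 4 + σ⁻¹ ^ 2 * ξ⁻¹ ^ 2) * ((ξ + 1) ^ 2 + 1)) *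
             (u⁻¹ + 1 + u + u ^ (2:ℕ) + u ^ (3:ℕ) + u ^ (4:ℕ) + (u ^ ξ) ^ (2:ℕ) +
              u ^ (2:ℕ) * (u ^ ξ) ^ (2:ℕ)))) := by
          rw [hpow, hGeq]
          apply mul_le_mul_of_nonneg_left _ (by positivity)
          apply mul_le_mul_of_nonneg_left _ (by positivity)
          exact hcore
      _ = C * (u ^ β * u⁻¹ * Real.exp (-(1 + α) * u)) +
          C * (u ^ β * Real.exp (-(1 + α) * u)) +
          C * (u ^ β * u * Real.exp (-(1 + α) * u)) +
          C * (u ^ β * u ^ (2:ℕ) * Real.exp (-(1 + α) * u)) +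
          C * (u ^ β * u ^ (3:ℕ) * Real.exp (-(1 + α) * u)) +
          C * (u ^ β * u ^ (4:ℕ) * Real.exp (-(1 + α) * u)) +
          C * (u ^ β * (u ^ ξ) ^ (2:ℕ) * Real.exp (-(1 + α) * u)) +
          C * (u ^ β * ((u ^ ξ) ^ (2:ℕ) * u ^ (2:ℕ)) * Real.exp (-(1 + α) * u)) := by
          rw [hC]; ring
      _ = _ := by rw [e1, e2, e3, e4, e5, e6, e7]

lemma density_nonneg {μ σ ξ : ℝ} (hσ : 0 < σ) (x : ℝ) : 0 ≤ gevDensity μ σ ξ x := by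
  unfold gevDensity
  split_ifs with h
  · exact mul_nonneg (mul_nonneg (by positivity) (Real.rpow_nonneg h.le _))
      (Real.exp_pos _).le
  · exact le_refl 0

lemma entry_bound_aux {p r P t : ℝ} (hP : 0 ≤ P) (h : p ^ 2 + r ^ 2 ≤ 2 * t) :
    ‖p * r * P‖ ≤ t * P := by
  rw [Real.norm_eq_abs, abs_mul, abs_of_nonneg hP]
  apply mul_le_mul_of_nonneg_right _ hP
  rw [abs_mul]
  nlinarith [sq_nonneg (|p| - |r|), sq_abs p, sq_abs r, abs_nonneg p, abs_nonneg r]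

lemma entry_int (α μ σ ξ : ℝ) (hα : 0 < α) (hσ : 0 < σ) (hξ0 : ξ ≠ 0)
    (hξ : ξ > -(1 + α) / (2 + α)) (p r : ℝ → ℝ) (hp : Measurable p) (hr : Measurable r)
    (hb : ∀ x, p x ^ 2 + r x ^ 2 ≤
      2 * (scoreMu μ σ ξ x ^ 2 + scoreSigma μ σ ξ x ^ 2 + scoreXi μ σ ξ x ^ 2)) :
    IntegrableOn (fun x => p x * r x * gevDensity μ σ ξ x ^ (1 + α))
      {x : ℝ | 0 < gevT μ σ ξ x} := by
  apply Integrable.mono' (key α μ σ ξ hα hσ hξ0 hξ)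
  · have hD : Measurable (fun x => gevDensity μ σ ξ x ^ (1 + α)) := by
      have := meas_density μ σ ξ; fun_prop
    exact ((hp.mul hr).mul hD).aestronglyMeasurable
  · refine Filter.Eventually.of_forall fun x => ?_
    exact entry_bound_aux (Real.rpow_nonneg (density_nonneg hσ x) _) (hb x)

/-- For `ξ ≠ 0` with `ξ > -(1+α)/(2+α)`, the integral over the support `D` of
`(S_μ² + S_σ² + S_ξ²) f^{1+α}` is finite; in particular every entry of the matrix
`J_α = ∫_D S Sᵀ f^{1+α}` with `S = (S_μ, S_σ, S_ξ)ᵀ` is given by a convergent integral. -/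
theorem stmt_13 (α μ σ ξ : ℝ) (hα : 0 < α) (hσ : 0 < σ) (hξ0 : ξ ≠ 0)
    (hξ : ξ > -(1 + α) / (2 + α)) :
    IntegrableOn
      (fun x => (scoreMu μ σ ξ x ^ 2 + scoreSigma μ σ ξ x ^ 2 + scoreXi μ σ ξ x ^ 2) *
        gevDensity μ σ ξ x ^ (1 + α))
      {x : ℝ | 0 < gevT μ σ ξ x} ∧
    ∀ i j : Fin 3,
      IntegrableOn
        (fun x => ![scoreMu μ σ ξ, scoreSigma μ σ ξ, scoreXi μ σ ξ] i x *
          ![scoreMu μ σ ξ, scoreSigma μ σ ξ, scoreXi μ σ ξ] j x *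
          gevDensity μ σ ξ x ^ (1 + α))
        {x : ℝ | 0 < gevT μ σ ξ x} := by
  have hm : ∀ k : Fin 3, Measurable (![scoreMu μ σ ξ, scoreSigma μ σ ξ, scoreXi μ σ ξ] k) := by
    intro k
    fin_cases k <;> simp <;>
      first
        | exact meas_scoreMu μ σ ξ
        | exact meas_scoreSigma μ σ ξ
        | exact meas_scoreXi μ σ ξ
  have hsq : ∀ (k : Fin 3) (x : ℝ),
      (![scoreMu μ σ ξ, scoreSigma μ σ ξ, scoreXi μ σ ξ] k) x ^ 2 ≤
      scoreMu μ σ ξ x ^ 2 + scoreSigma μ σ ξ x ^ 2 + scoreXi μ σ ξ x ^ 2 := by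
    intro k x
    fin_cases k <;> simp <;>
      linarith [sq_nonneg (scoreMu μ σ ξ x), sq_nonneg (scoreSigma μ σ ξ x),
        sq_nonneg (scoreXi μ σ ξ x)]
  exact ⟨key α μ σ ξ hα hσ hξ0 hξ, fun i j =>
    entry_int α μ σ ξ hα hσ hξ0 hξ _ _ (hm i) (hm j)
      (fun x => by linarith [hsq i x, hsq j x])⟩
end
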